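/- arXiv:1303.6012 — 11 statements merged into one kernel-verified Lean document; each statement's English description precedes it below -/
import Mathlib

section
/- Let H and H' be real inner product spaces, let G : H → H' be a linear map, and let φ₁, …, φ_r be an orthonormal family in H. Let S be the r × r real matrix with entries S_{ij} = ⟪G φ_j, G φ_i⟫. Then for every choice of coefficients a₁, …, a_r ∈ ℝ, the element v = Σ_{j=1}^r a_j φ_j satisfies ‖G v‖ ≤ √(‖S‖₂) · ‖v‖, where ‖S‖₂ denotes the operator norm of S acting on the Euclidean space ℝʳ. (POD inverse estimate, Lemma 3.1 of the paper: H plays the role of H¹₀(Ω) with the L² inner product, G the gradient, φ_j the L²-orthonormal POD basis, and S the POD stiffness matrix.) -/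
open scoped RealInnerProductSpace

/-- POD inverse estimate (Lemma 3.1): for an orthonormal family `φ₁, …, φ_r` in `H`,
a linear map `G : H → H'`, and the stiffness matrix `S` with `S i j = ⟪G φ_j, G φ_i⟫`,
every `v = ∑ a_j • φ_j` satisfies `‖G v‖ ≤ √(‖S‖₂) * ‖v‖`. -/
theorem pod_inverse_estimate
    {H H' : Type*} [NormedAddCommGroup H] [InnerProductSpace ℝ H]
    [NormedAddCommGroup H'] [InnerProductSpace ℝ H']
    (r : ℕ) (G : H →ₗ[ℝ] H') (φ : Fin r → H) (hφ : Orthonormal ℝ φ)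
    (S : Matrix (Fin r) (Fin r) ℝ)
    (hS : ∀ i j, S i j = ⟪G (φ j), G (φ i)⟫)
    (a : Fin r → ℝ) :
    ‖G (∑ j, a j • φ j)‖ ≤
      Real.sqrt ‖Matrix.toEuclideanCLM (𝕜 := ℝ) S‖ * ‖∑ j, a j • φ j‖ := by
  set v := ∑ j, a j • φ j with hv
  set T := Matrix.toEuclideanCLM (𝕜 := ℝ) S with hT
  set x : EuclideanSpace ℝ (Fin r) := (WithLp.equiv 2 _).symm a with hx
  have hxnorm : ‖x‖ ^ 2 = ‖v‖ ^ 2 := by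
    have h1 : ⟪v, v⟫ = ∑ i, a i * a i := by
      simpa using hφ.inner_sum a a Finset.univ
    have h2 : ⟪x, x⟫ = ∑ i, a i * a i := by
      rw [EuclideanSpace.inner_eq_star_dotProduct]
      simp [hx, EuclideanSpace.inner_eq_star_dotProduct, dotProduct,
        PiLp.toLp_apply, mul_comm]
    rw [← real_inner_self_eq_norm_sq, ← real_inner_self_eq_norm_sq, h1, h2]
  have hGv : ‖G v‖ ^ 2 = ⟪x, T x⟫ := by
    have hTx : ∀ i, T x i = ∑ j, S i j * a j := by
      intro i
      simp [hT, hx, Matrix.toEuclideanCLM_toLp, Matrix.toLin'_apply,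
        Matrix.mulVec, dotProduct, PiLp.toLp_apply]
    have h2 : ⟪x, T x⟫ = ∑ i, ∑ j, a i * (S i j * a j) := by
      rw [EuclideanSpace.inner_eq_star_dotProduct]
      simp only [dotProduct, hTx]
      simp [dotProduct, hTx, Finset.mul_sum, hx, PiLp.toLp_apply,
        mul_comm]
    have h1 : ⟪G v, G v⟫ = ∑ i, ∑ j, a i * (S i j * a j) := by
      rw [hv, map_sum]
      simp only [map_smul, sum_inner, inner_sum, real_inner_smul_left,
        real_inner_smul_right]
      rw [Finset.sum_comm]
      refine Finset.sum_congr rfl fun i _ => Finset.sum_congr rfl fun j _ => ?_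
      rw [real_inner_comm, ← hS i j]; ring
    rw [← real_inner_self_eq_norm_sq, h1, h2]
  have hbound : ⟪x, T x⟫ ≤ ‖T‖ * ‖v‖ ^ 2 := by
    calc ⟪x, T x⟫ ≤ ‖x‖ * ‖T x‖ := real_inner_le_norm x (T x)
      _ ≤ ‖x‖ * (‖T‖ * ‖x‖) := by
          exact mul_le_mul_of_nonneg_left (T.le_opNorm x) (norm_nonneg x)
      _ = ‖T‖ * ‖x‖ ^ 2 := by ring
      _ = ‖T‖ * ‖v‖ ^ 2 := by rw [hxnorm]
  have hsq : ‖G v‖ ^ 2 ≤ ‖T‖ * ‖v‖ ^ 2 := hGv ▸ hbound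
  have := Real.sqrt_le_sqrt hsq
  rw [Real.sqrt_sq (norm_nonneg _), Real.sqrt_mul (norm_nonneg T),
    Real.sqrt_sq (norm_nonneg v)] at this
  exact this
end

section
/- Let H be a real inner product space and s₁, …, s_M ∈ H a family of snapshots. Let K be the M × M real symmetric positive semidefinite correlation matrix with entries K_{ij} = ⟪s_j, s_i⟫, let λ₁ ≥ λ₂ ≥ … ≥ λ_M ≥ 0 be its eigenvalues with a corresponding orthonormal family of eigenvectors v₁, …, v_M ∈ ℝᴹ, and let d be the number of positive eigenvalues (so λ_k > 0 exactly for k ≤ d). For 1 ≤ k ≤ d define the POD basis functions φ_k := (1/√λ_k) Σ_{j=1}^M (v_k)_j s_j. Then the family φ₁, …, φ_d is orthonormal in H: ⟪φ_k, φ_l⟫ = δ_{kl} for all 1 ≤ k, l ≤ d. -/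
open scoped RealInnerProductSpace

/-- The POD basis functions `φ_k = (1/√λ_k) ∑_j (v_k)_j s_j` built from the eigenpairs of the
snapshot correlation matrix `K_{ij} = ⟪s_j, s_i⟫` form an orthonormal family. -/
theorem pod_basis_orthonormal
    {H : Type*} [NormedAddCommGroup H] [InnerProductSpace ℝ H]
    (M : ℕ) (s : Fin M → H)
    (K : Matrix (Fin M) (Fin M) ℝ)
    (hK : ∀ i j, K i j = ⟪s j, s i⟫)
    (lam : Fin M → ℝ) (v : Fin M → Fin M → ℝ)
    (hlam_sorted : ∀ k l : Fin M, k ≤ l → lam l ≤ lam k)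
    (hlam_nonneg : ∀ k, 0 ≤ lam k)
    (heig : ∀ k, K.mulVec (v k) = lam k • v k)
    (hortho : ∀ k l, (∑ j, v k j * v l j) = if k = l then (1:ℝ) else 0)
    (d : ℕ)
    (hd : ∀ k : Fin M, 0 < lam k ↔ (k : ℕ) < d)
    (φ : Fin M → H)
    (hφ : ∀ k : Fin M, (k : ℕ) < d →
      φ k = (1 / Real.sqrt (lam k)) • ∑ j, v k j • s j) :
    ∀ k l : Fin M, (k : ℕ) < d → (l : ℕ) < d →
      ⟪φ k, φ l⟫ = if k = l then (1:ℝ) else 0 := by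
  intro k l hk hl
  have hrow : ∀ i, (∑ j, v l j * ⟪s i, s j⟫) = lam l * v l i := by
    intro i
    have h := congrFun (heig l) i
    simp only [Matrix.mulVec, dotProduct, Pi.smul_apply, smul_eq_mul] at h
    calc (∑ j, v l j * ⟪s i, s j⟫) = ∑ j, K i j * v l j := by
          refine Finset.sum_congr rfl fun j _ => ?_
          rw [hK i j, real_inner_comm, mul_comm]
      _ = lam l * v l i := h
  have key : ⟪(∑ i, v k i • s i : H), (∑ j, v l j • s j : H)⟫
      = lam l * (if k = l then (1:ℝ) else 0) := by
    rw [sum_inner]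
    have : ∀ i ∈ Finset.univ, ⟪v k i • s i, (∑ j, v l j • s j : H)⟫
        = v k i * (lam l * v l i) := by
      intro i _
      rw [real_inner_smul_left, inner_sum]
      congr 1
      rw [← hrow i]
      exact Finset.sum_congr rfl fun j _ => by rw [real_inner_smul_right]
    rw [Finset.sum_congr rfl this, ← hortho k l, Finset.mul_sum]
    exact Finset.sum_congr rfl fun i _ => by ring
  rw [hφ k hk, hφ l hl, real_inner_smul_left, real_inner_smul_right, key]
  by_cases hkl : k = l
  · subst hkl
    simp only [if_pos rfl, mul_one]
    have hpos : 0 < lam k := (hd k).2 hk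
    have hs : Real.sqrt (lam k) ≠ 0 := by positivity
    field_simp
    rw [Real.sq_sqrt hpos.le]
  · simp [hkl]
end

section
/- Let H be a real inner product space and s₁, …, s_M ∈ H a family of snapshots. Let K be the M × M real symmetric positive semidefinite correlation matrix with entries K_{ij} = ⟪s_j, s_i⟫, let λ₁ ≥ λ₂ ≥ … ≥ λ_M ≥ 0 be its eigenvalues with a corresponding orthonormal family of eigenvectors v₁, …, v_M ∈ ℝᴹ, and let d be the number of positive eigenvalues. For 1 ≤ k ≤ d define φ_k := (1/√λ_k) Σ_{j=1}^M (v_k)_j s_j. Then for every 0 ≤ r ≤ d the POD approximation property holds: Σ_{i=1}^M ‖ s_i − Σ_{j=1}^r ⟪s_i, φ_j⟫ φ_j ‖² = Σ_{j=r+1}^d λ_j. (This is the approximation property (2.8)–(2.9) of the paper: the total squared projection error of the snapshots onto the span of the first r POD modes equals the sum of the discarded eigenvalues.) -/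
open scoped RealInnerProductSpace

/-- POD approximation property (2.8)–(2.9): for every `0 ≤ r ≤ d`, the total squared
projection error of the snapshots onto the span of the first `r` POD modes equals the sum
of the discarded eigenvalues: `∑_i ‖s_i − ∑_{j≤r} ⟪s_i, φ_j⟫ φ_j‖² = ∑_{j=r+1}^d λ_j`. -/
theorem pod_approximation_property
    {H : Type*} [NormedAddCommGroup H] [InnerProductSpace ℝ H]
    (M : ℕ) (s : Fin M → H)
    (K : Matrix (Fin M) (Fin M) ℝ)
    (hK : ∀ i j, K i j = ⟪s j, s i⟫)
    (lam : Fin M → ℝ) (v : Fin M → Fin M → ℝ)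
    (hlam_sorted : ∀ k l : Fin M, k ≤ l → lam l ≤ lam k)
    (hlam_nonneg : ∀ k, 0 ≤ lam k)
    (heig : ∀ k, K.mulVec (v k) = lam k • v k)
    (hortho : ∀ k l, (∑ j, v k j * v l j) = if k = l then (1:ℝ) else 0)
    (d : ℕ)
    (hd : ∀ k : Fin M, 0 < lam k ↔ (k : ℕ) < d)
    (φ : Fin M → H)
    (hφ : ∀ k : Fin M, (k : ℕ) < d →
      φ k = (1 / Real.sqrt (lam k)) • ∑ j, v k j • s j) :
    ∀ r : ℕ, r ≤ d →
      ∑ i, ‖s i - ∑ j ∈ Finset.univ.filter (fun j : Fin M => (j : ℕ) < r),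
              ⟪s i, φ j⟫ • φ j‖ ^ 2
        = ∑ j ∈ Finset.univ.filter (fun j : Fin M => r ≤ (j : ℕ) ∧ (j : ℕ) < d),
              lam j := by
  intro r hr
  -- basic facts about eigenvalues
  have hlam_pos : ∀ k : Fin M, (k : ℕ) < d → 0 < lam k := fun k hk => (hd k).mpr hk
  have hlam_zero : ∀ k : Fin M, ¬ (k : ℕ) < d → lam k = 0 := by
    intro k hk
    have h1 : ¬ 0 < lam k := fun h => hk ((hd k).mp h)
    have := hlam_nonneg k
    linarith
  have hsqrt_pos : ∀ k : Fin M, (k : ℕ) < d → 0 < Real.sqrt (lam k) :=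
    fun k hk => Real.sqrt_pos.mpr (hlam_pos k hk)
  -- K entries via inner products (symmetric form)
  have hK' : ∀ i j, K i j = ⟪s i, s j⟫ := by
    intro i j; rw [hK, real_inner_comm]
  -- ⟪s i, φ k⟫ = √(lam k) * v k i
  have hinner_sφ : ∀ (i k : Fin M), (k : ℕ) < d →
      ⟪s i, φ k⟫ = Real.sqrt (lam k) * v k i := by
    intro i k hk
    rw [hφ k hk, inner_smul_right, inner_sum]
    have h1 : (∑ j, ⟪s i, v k j • s j⟫) = ∑ j, K i j * v k j := by
      refine Finset.sum_congr rfl fun j _ => ?_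
      rw [inner_smul_right, hK' i j]; ring
    have h2 : (∑ j, K i j * v k j) = lam k * v k i := by
      have := congrFun (heig k) i
      simpa [Matrix.mulVec, dotProduct] using this
    rw [h1, h2]
    have hpos := hsqrt_pos k hk
    have hls : lam k = Real.sqrt (lam k) * Real.sqrt (lam k) :=
      (Real.mul_self_sqrt (hlam_nonneg k)).symm
    rw [hls]; field_simp; rw [Real.sqrt_sq hpos.le]
  -- orthonormality of the φ's
  have hinner_φφ : ∀ k l : Fin M, (k : ℕ) < d → (l : ℕ) < d →
      ⟪φ k, φ l⟫ = if k = l then (1:ℝ) else 0 := by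
    intro k l hk hl
    rw [hφ k hk, real_inner_smul_left, sum_inner]
    have h1 : (∑ i, ⟪v k i • s i, φ l⟫)
        = Real.sqrt (lam l) * ∑ i, v k i * v l i := by
      rw [Finset.mul_sum]
      refine Finset.sum_congr rfl fun i _ => ?_
      rw [real_inner_smul_left, hinner_sφ i l hl]; ring
    rw [h1, hortho k l]
    by_cases hkl : k = l
    · subst hkl
      simp only [if_pos rfl, mul_one]
      have hpos := hsqrt_pos k hk
      field_simp
    · simp [hkl]
  -- per-snapshot expansion
  set F : Finset (Fin M) := Finset.univ.filter (fun j : Fin M => (j : ℕ) < r) with hF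
  have hFd : ∀ j : Fin M, j ∈ F → (j : ℕ) < d := by
    intro j hj
    simp only [hF, Finset.mem_filter] at hj
    omega
  have key : ∀ i : Fin M,
      ‖s i - ∑ j ∈ F, ⟪s i, φ j⟫ • φ j‖ ^ 2
        = ‖s i‖ ^ 2 - ∑ j ∈ F, lam j * (v j i * v j i) := by
    intro i
    set T : H := ∑ j ∈ F, ⟪s i, φ j⟫ • φ j with hT
    have hsT : ⟪s i, T⟫ = ∑ j ∈ F, lam j * (v j i * v j i) := by
      rw [hT, inner_sum]
      refine Finset.sum_congr rfl fun j hj => ?_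
      rw [inner_smul_right, hinner_sφ i j (hFd j hj)]
      have := Real.mul_self_sqrt (hlam_nonneg j)
      nlinarith [this]
    have hTT : ⟪T, T⟫ = ∑ j ∈ F, lam j * (v j i * v j i) := by
      rw [hT, sum_inner]
      have h1 : ∀ j ∈ F, ⟪⟪s i, φ j⟫ • φ j, ∑ l ∈ F, ⟪s i, φ l⟫ • φ l⟫
          = lam j * (v j i * v j i) := by
        intro j hj
        rw [real_inner_smul_left, inner_sum]
        have h2 : (∑ l ∈ F, ⟪φ j, ⟪s i, φ l⟫ • φ l⟫)
            = ∑ l ∈ F, (if j = l then ⟪s i, φ l⟫ else 0) := by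
          refine Finset.sum_congr rfl fun l hl => ?_
          rw [inner_smul_right, hinner_φφ j l (hFd j hj) (hFd l hl)]
          by_cases h : j = l <;> simp [h]
        rw [h2, Finset.sum_ite_eq F j (fun l => ⟪s i, φ l⟫), if_pos hj,
          hinner_sφ i j (hFd j hj)]
        have := Real.mul_self_sqrt (hlam_nonneg j)
        nlinarith [this]
      rw [Finset.sum_congr rfl h1]
    have hnorm : ‖T‖ ^ 2 = ∑ j ∈ F, lam j * (v j i * v j i) := by
      rw [← real_inner_self_eq_norm_sq, hTT]
    rw [norm_sub_sq_real, hsT, hnorm]; ring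
  rw [Finset.sum_congr rfl (fun i _ => key i), Finset.sum_sub_distrib]
  -- ∑ over i of the correction term
  have hcorr : (∑ i, ∑ j ∈ F, lam j * (v j i * v j i)) = ∑ j ∈ F, lam j := by
    rw [Finset.sum_comm]
    refine Finset.sum_congr rfl fun j _ => ?_
    have : (∑ i, lam j * (v j i * v j i)) = lam j * ∑ i, v j i * v j i := by
      rw [Finset.mul_sum]
    rw [this, hortho j j, if_pos rfl, mul_one]
  -- column orthonormality
  have hcol : ∀ i j : Fin M, (∑ k, v k i * v k j) = if i = j then (1:ℝ) else 0 := by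
    have h1 : (Matrix.of v) * (Matrix.of v).transpose = 1 := by
      ext k l
      simpa [Matrix.mul_apply, Matrix.one_apply] using hortho k l
    have h2 := mul_eq_one_comm.mp h1
    intro i j
    have := congrFun (congrFun h2 i) j
    simpa [Matrix.mul_apply, Matrix.one_apply] using this
  -- trace identity: ∑ ‖s i‖² = ∑ lam k
  have htrace : (∑ i, ‖s i‖ ^ 2) = ∑ k, lam k := by
    have hKd : ∀ i : Fin M, ‖s i‖ ^ 2 = K i i := by
      intro i; rw [hK' i i, real_inner_self_eq_norm_sq]
    calc (∑ i, ‖s i‖ ^ 2) = ∑ i, K i i := Finset.sum_congr rfl fun i _ => hKd i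
      _ = ∑ i, ∑ j, K i j * (if j = i then (1:ℝ) else 0) := by
          refine Finset.sum_congr rfl fun i _ => ?_
          symm
          simp [mul_ite]
      _ = ∑ i, ∑ j, K i j * ∑ k, v k j * v k i := by
          refine Finset.sum_congr rfl fun i _ => Finset.sum_congr rfl fun j _ => ?_
          rw [hcol j i]
      _ = ∑ i, ∑ j, ∑ k, K i j * (v k j * v k i) := by
          refine Finset.sum_congr rfl fun i _ => Finset.sum_congr rfl fun j _ => ?_
          rw [Finset.mul_sum]
      _ = ∑ i, ∑ k, ∑ j, K i j * (v k j * v k i) :=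
          Finset.sum_congr rfl fun i _ => Finset.sum_comm
      _ = ∑ k, ∑ i, ∑ j, K i j * (v k j * v k i) := Finset.sum_comm
      _ = ∑ k, ∑ i, (∑ j, K i j * v k j) * v k i := by
          refine Finset.sum_congr rfl fun k _ => Finset.sum_congr rfl fun i _ => ?_
          rw [Finset.sum_mul]
          exact Finset.sum_congr rfl fun j _ => by ring
      _ = ∑ k, ∑ i, (lam k * v k i) * v k i := by
          refine Finset.sum_congr rfl fun k _ => Finset.sum_congr rfl fun i _ => ?_
          have := congrFun (heig k) i
          simp only [Matrix.mulVec, dotProduct, Pi.smul_apply, smul_eq_mul] at this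
          rw [this]
      _ = ∑ k, lam k := by
          refine Finset.sum_congr rfl fun k _ => ?_
          have : (∑ i, (lam k * v k i) * v k i) = lam k * ∑ i, v k i * v k i := by
            rw [Finset.mul_sum]; exact Finset.sum_congr rfl fun i _ => by ring
          rw [this, hortho k k, if_pos rfl, mul_one]
  rw [hcorr, htrace]
  -- split the full eigenvalue sum
  have hsplit : (∑ k, lam k)
      = (∑ j ∈ F, lam j)
        + ∑ j ∈ Finset.univ.filter (fun j : Fin M => r ≤ (j : ℕ) ∧ (j : ℕ) < d), lam j := by
    have h0 : (∑ k, lam k) = ∑ k ∈ Finset.univ.filter (fun k : Fin M => (k : ℕ) < d), lam k := by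
      rw [eq_comm]
      refine Finset.sum_filter_of_ne ?_
      intro k _ hk
      by_contra h
      exact hk (hlam_zero k h)
    rw [h0]
    rw [← Finset.sum_filter_add_sum_filter_not
      (Finset.univ.filter (fun k : Fin M => (k : ℕ) < d)) (fun k => (k : ℕ) < r) lam]
    congr 1
    · apply Finset.sum_congr _ (fun _ _ => rfl)
      ext k
      simp only [hF, Finset.mem_filter, Finset.mem_univ, true_and]
      omega
    · apply Finset.sum_congr _ (fun _ _ => rfl)
      ext k
      simp only [Finset.mem_filter, Finset.mem_univ, true_and]
      omega
  rw [hsplit]; ring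
end

section
/- Let H be a real inner product space and s₁, …, s_M ∈ H a family of snapshots. Let K be the M × M real symmetric positive semidefinite correlation matrix with entries K_{ij} = ⟪s_j, s_i⟫, let λ₁ ≥ λ₂ ≥ … ≥ λ_M ≥ 0 be its eigenvalues, and let d be the number of positive eigenvalues. Then for every 0 ≤ r ≤ d and every orthonormal family ψ₁, …, ψ_r in H, Σ_{i=1}^M ‖ s_i − Σ_{j=1}^r ⟪s_i, ψ_j⟫ ψ_j ‖² ≥ Σ_{j=r+1}^d λ_j. (Hence, combined with the POD approximation property, the POD basis solves the minimization problem (2.4) of the paper: among all orthonormal families of size r it minimizes the total squared projection error of the snapshots.) -/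
open scoped RealInnerProductSpace

lemma pod_expand_err {H : Type*} [NormedAddCommGroup H] [InnerProductSpace ℝ H]
    {ι : Type*} [Fintype ι] [DecidableEq ι] (u : ι → H)
    (hu : ∀ k l, ⟪u k, u l⟫ = if k = l then (1:ℝ) else 0) (x : H) :
    ‖x - ∑ k, ⟪x, u k⟫ • u k‖ ^ 2 = ‖x‖ ^ 2 - ∑ k, ⟪x, u k⟫ ^ 2 := by
  have h1 : ⟪x, ∑ k, ⟪x, u k⟫ • u k⟫ = ∑ k, ⟪x, u k⟫ ^ 2 := by
    rw [inner_sum]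
    exact Finset.sum_congr rfl fun k _ => by rw [real_inner_smul_right, sq]
  have h2 : ‖(∑ k, ⟪x, u k⟫ • u k)‖ ^ 2 = ∑ k, ⟪x, u k⟫ ^ 2 := by
    rw [← real_inner_self_eq_norm_sq, sum_inner]
    refine Finset.sum_congr rfl fun k _ => ?_
    rw [real_inner_smul_left, inner_sum]
    simp only [real_inner_smul_right, hu]
    simp [sq]
  rw [norm_sub_sq_real, h1, h2]; ring

lemma pod_bessel {H : Type*} [NormedAddCommGroup H] [InnerProductSpace ℝ H]
    {ι : Type*} [Fintype ι] [DecidableEq ι] (u : ι → H)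
    (hu : ∀ k l, ⟪u k, u l⟫ = if k = l then (1:ℝ) else 0) (x : H) :
    ∑ k, ⟪x, u k⟫ ^ 2 ≤ ‖x‖ ^ 2 := by
  have h := pod_expand_err u hu x
  nlinarith [sq_nonneg ‖x - ∑ k, ⟪x, u k⟫ • u k‖]

/-- POD optimality (minimization problem (2.4)): for every `0 ≤ r ≤ d` and every orthonormal
family `ψ₁, …, ψ_r` in `H`, the total squared projection error of the snapshots onto the span
of the `ψ_j` is at least `∑_{j=r+1}^d λ_j`, the sum of the discarded POD eigenvalues. -/
theorem pod_optimality
    {H : Type*} [NormedAddCommGroup H] [InnerProductSpace ℝ H]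
    (M : ℕ) (s : Fin M → H)
    (K : Matrix (Fin M) (Fin M) ℝ)
    (hK : ∀ i j, K i j = ⟪s j, s i⟫)
    (lam : Fin M → ℝ) (v : Fin M → Fin M → ℝ)
    (hlam_sorted : ∀ k l : Fin M, k ≤ l → lam l ≤ lam k)
    (hlam_nonneg : ∀ k, 0 ≤ lam k)
    (heig : ∀ k, K.mulVec (v k) = lam k • v k)
    (hortho : ∀ k l, (∑ j, v k j * v l j) = if k = l then (1:ℝ) else 0)
    (d : ℕ)
    (hd : ∀ k : Fin M, 0 < lam k ↔ (k : ℕ) < d)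
    (r : ℕ) (hr : r ≤ d)
    (ψ : Fin r → H) (hψ : Orthonormal ℝ ψ) :
    ∑ j ∈ Finset.univ.filter (fun j : Fin M => r ≤ (j : ℕ) ∧ (j : ℕ) < d), lam j ≤
      ∑ i, ‖s i - ∑ j, ⟪s i, ψ j⟫ • ψ j‖ ^ 2 := by
  classical
  by_cases hrM : M ≤ r
  · have h1 : Finset.univ.filter (fun j : Fin M => r ≤ (j : ℕ) ∧ (j : ℕ) < d) = ∅ := by
      ext j
      simp only [Finset.mem_filter, Finset.mem_univ, true_and, Finset.notMem_empty, iff_false]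
      rintro ⟨h, -⟩; exact absurd (lt_of_lt_of_le j.isLt hrM) (not_lt.mpr h)
    rw [h1, Finset.sum_empty]
    exact Finset.sum_nonneg fun i _ => sq_nonneg _
  push_neg at hrM
  have hψite : ∀ i j, ⟪ψ i, ψ j⟫ = if i = j then (1:ℝ) else 0 := orthonormal_iff_ite.mp hψ
  -- column orthonormality of the eigenvector matrix
  have hcol : ∀ i j : Fin M, (∑ k, v k i * v k j) = if i = j then (1:ℝ) else 0 := by
    have hV : (Matrix.of v) * (Matrix.of v).transpose = 1 := by
      ext k l
      simpa [Matrix.mul_apply, Matrix.one_apply] using hortho k l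
    have hV2 : (Matrix.of v).transpose * (Matrix.of v) = 1 := mul_eq_one_comm.mp hV
    intro i j
    have h := congr_fun (congr_fun hV2 i) j
    simpa [Matrix.mul_apply, Matrix.one_apply] using h
  have hlam0 : ∀ k : Fin M, ¬ ((k:ℕ) < d) → lam k = 0 := by
    intro k hk
    rcases lt_or_eq_of_le (hlam_nonneg k) with h | h
    · exact absurd ((hd k).mp h) hk
    · exact h.symm
  -- unnormalized POD modes
  set w : Fin M → H := fun k => ∑ i, v k i • s i with hw_def
  have hsw_inner : ∀ (k : Fin M) (x : H), ⟪w k, x⟫ = ∑ i, v k i * ⟪s i, x⟫ := by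
    intro k x
    rw [hw_def]
    simp only
    rw [sum_inner]
    exact Finset.sum_congr rfl fun i _ => by rw [real_inner_smul_left]
  have hswl : ∀ (l i : Fin M), ⟪s i, w l⟫ = lam l * v l i := by
    intro l i
    rw [real_inner_comm, hsw_inner]
    calc ∑ i', v l i' * ⟪s i', s i⟫ = ∑ i', K i i' * v l i' := by
          exact Finset.sum_congr rfl fun i' _ => by rw [← hK]; ring
      _ = K.mulVec (v l) i := rfl
      _ = lam l * v l i := by rw [heig]; rfl
  have hww : ∀ k l, ⟪w k, w l⟫ = lam l * (if k = l then (1:ℝ) else 0) := by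
    intro k l
    rw [hsw_inner]
    calc ∑ i, v k i * ⟪s i, w l⟫ = lam l * ∑ i, v k i * v l i := by
          rw [Finset.mul_sum]
          exact Finset.sum_congr rfl fun i _ => by rw [hswl]; ring
      _ = _ := by rw [hortho]
  have hwz : ∀ k : Fin M, ¬ ((k:ℕ) < d) → w k = 0 := by
    intro k hk
    have : ⟪w k, w k⟫ = 0 := by rw [hww]; simp [hlam0 k hk]
    exact inner_self_eq_zero.mp this
  -- decomposition of snapshots
  have hs_dec : ∀ i, s i = ∑ k, v k i • w k := by
    intro i
    have h1 : ∑ k, v k i • w k = ∑ i', (∑ k, v k i * v k i') • s i' := by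
      rw [hw_def]
      simp only [Finset.smul_sum, smul_smul]
      rw [Finset.sum_comm]
      exact Finset.sum_congr rfl fun i' _ => by rw [Finset.sum_smul]
    rw [h1]
    rw [Finset.sum_congr rfl fun i' _ => by rw [hcol i i']]
    simp [ite_smul]
  -- normalized POD modes
  set u : Fin M → H := fun k => (Real.sqrt (lam k))⁻¹ • w k with hu_def
  have hwu : ∀ k : Fin M, w k = Real.sqrt (lam k) • u k := by
    intro k
    by_cases hk : (k:ℕ) < d
    · have hp : 0 < lam k := (hd k).mpr hk
      rw [hu_def]
      simp only
      rw [smul_smul, mul_inv_cancel₀ (ne_of_gt (Real.sqrt_pos.mpr hp)), one_smul]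
    · rw [hwz k hk, hu_def]; simp [hwz k hk]
  have huu : ∀ k l : Fin M, (k:ℕ) < d → (l:ℕ) < d →
      ⟪u k, u l⟫ = if k = l then (1:ℝ) else 0 := by
    intro k l hk hl
    have hpk : 0 < lam k := (hd k).mpr hk
    rw [hu_def]
    simp only
    rw [real_inner_smul_left, real_inner_smul_right, hww]
    by_cases hkl : k = l
    · subst hkl
      rw [if_pos rfl]
      have h2 : Real.sqrt (lam k) * Real.sqrt (lam k) = lam k := Real.mul_self_sqrt hpk.le
      have h3 : Real.sqrt (lam k) ≠ 0 := ne_of_gt (Real.sqrt_pos.mpr hpk)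
      field_simp
      rw [Real.sq_sqrt hpk.le]
    · simp [hkl]
  -- expansion of the inner products
  have hsψ : ∀ (i : Fin M) (j : Fin r), ⟪s i, ψ j⟫ = ∑ k, v k i * ⟪w k, ψ j⟫ := by
    intro i j
    conv_lhs => rw [hs_dec i]
    rw [sum_inner]
    exact Finset.sum_congr rfl fun k _ => by rw [real_inner_smul_left]
  have hsum_sq : ∀ j : Fin r, ∑ i, ⟪s i, ψ j⟫ ^ 2 = ∑ k, ⟪w k, ψ j⟫ ^ 2 := by
    intro j
    calc ∑ i, ⟪s i, ψ j⟫ ^ 2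
        = ∑ i, ∑ k, ∑ l, (v k i * ⟪w k, ψ j⟫) * (v l i * ⟪w l, ψ j⟫) := by
          refine Finset.sum_congr rfl fun i _ => ?_
          rw [hsψ, sq, Finset.sum_mul_sum]
      _ = ∑ k, ∑ l, (⟪w k, ψ j⟫ * ⟪w l, ψ j⟫) * ∑ i, v k i * v l i := by
          rw [Finset.sum_comm]
          refine Finset.sum_congr rfl fun k _ => ?_
          rw [Finset.sum_comm]
          refine Finset.sum_congr rfl fun l _ => ?_
          rw [Finset.mul_sum]
          exact Finset.sum_congr rfl fun i _ => by ring
      _ = ∑ k, ⟪w k, ψ j⟫ ^ 2 := by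
          refine Finset.sum_congr rfl fun k _ => ?_
          rw [Finset.sum_congr rfl fun l _ => by rw [hortho k l]]
          simp [mul_ite, sq]
  have hc_sq : ∀ (j : Fin r) (k : Fin M), ⟪w k, ψ j⟫ ^ 2 = lam k * ⟪u k, ψ j⟫ ^ 2 := by
    intro j k
    rw [hwu k, real_inner_smul_left, mul_pow, Real.sq_sqrt (hlam_nonneg k)]
  -- trace identity
  have htrace : ∑ i, ‖s i‖ ^ 2 = ∑ k, lam k := by
    have h2 : ∀ i : Fin M, K i i = ∑ k, lam k * (v k i)^2 := by
      intro i
      calc K i i = ∑ j, K i j * (if i = j then (1:ℝ) else 0) := by simp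
        _ = ∑ j, K i j * ∑ k, v k i * v k j := by
            exact Finset.sum_congr rfl fun j _ => by rw [hcol i j]
        _ = ∑ k, v k i * (K.mulVec (v k) i) := by
            simp only [Matrix.mulVec, dotProduct, Finset.mul_sum]
            rw [Finset.sum_comm]
            exact Finset.sum_congr rfl fun k _ =>
              Finset.sum_congr rfl fun j _ => by ring
        _ = ∑ k, lam k * (v k i)^2 := by
            refine Finset.sum_congr rfl fun k _ => ?_
            rw [heig]
            simp only [Pi.smul_apply, smul_eq_mul]
            ring
    calc ∑ i, ‖s i‖ ^ 2 = ∑ i, K i i := by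
          exact Finset.sum_congr rfl fun i _ => by rw [hK, real_inner_self_eq_norm_sq]
      _ = ∑ i, ∑ k, lam k * (v k i)^2 := Finset.sum_congr rfl fun i _ => h2 i
      _ = ∑ k, lam k * ∑ i, (v k i)^2 := by
          rw [Finset.sum_comm]
          exact Finset.sum_congr rfl fun k _ => by rw [Finset.mul_sum]
      _ = ∑ k, lam k := by
          refine Finset.sum_congr rfl fun k _ => ?_
          have h5 := hortho k k
          rw [if_pos rfl] at h5
          have h4 : ∑ i, (v k i)^2 = 1 := by
            calc ∑ i, (v k i)^2 = ∑ i, v k i * v k i :=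
                  Finset.sum_congr rfl fun i _ => sq (v k i)
              _ = 1 := h5
          rw [h4, mul_one]
  -- Bessel inequalities
  set Sd := Finset.univ.filter (fun k : Fin M => (k:ℕ) < d) with hSd_def
  set Sr := Finset.univ.filter (fun k : Fin M => (k:ℕ) < r) with hSr_def
  set T : Fin M → ℝ := fun k => ∑ j, ⟪u k, ψ j⟫ ^ 2 with hT_def
  have hT0 : ∀ k, 0 ≤ T k := fun k => Finset.sum_nonneg fun j _ => sq_nonneg _
  have hT1 : ∀ k : Fin M, (k:ℕ) < d → T k ≤ 1 := by
    intro k hk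
    have hb := pod_bessel ψ hψite (u k)
    have hnorm : ‖u k‖ ^ 2 = 1 := by
      rw [← real_inner_self_eq_norm_sq, huu k k hk hk, if_pos rfl]
    rw [hnorm] at hb
    exact hb
  have hrow : ∀ j : Fin r, ∑ k ∈ Sd, ⟪u k, ψ j⟫ ^ 2 ≤ 1 := by
    intro j
    have hu' : ∀ k l : {k : Fin M // (k:ℕ) < d},
        ⟪u k.1, u l.1⟫ = if k = l then (1:ℝ) else 0 := by
      intro k l
      rw [huu k.1 l.1 k.2 l.2]
      by_cases h : k = l
      · simp [h]
      · rw [if_neg (fun hh => h (Subtype.ext hh)), if_neg h]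
    have hb := pod_bessel (fun k : {k : Fin M // (k:ℕ) < d} => u k.1) hu' (ψ j)
    have hnψ : ‖ψ j‖ ^ 2 = 1 := by rw [hψ.1 j]; norm_num
    rw [hnψ] at hb
    have hs : ∑ k ∈ Sd, ⟪u k, ψ j⟫ ^ 2
        = ∑ k : {k : Fin M // (k:ℕ) < d}, ⟪ψ j, u k.1⟫ ^ 2 := by
      rw [hSd_def]
      rw [Finset.sum_subtype (p := fun k : Fin M => (k:ℕ) < d)
        (Finset.univ.filter (fun k : Fin M => (k:ℕ) < d))
        (by simp) (fun k => ⟪u k, ψ j⟫ ^ 2)]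
      exact Finset.sum_congr rfl fun k _ => by rw [real_inner_comm]
    rw [hs]
    exact hb
  have hTsum : ∑ k ∈ Sd, T k ≤ (r:ℝ) := by
    have h1 : ∑ k ∈ Sd, T k = ∑ j : Fin r, ∑ k ∈ Sd, ⟪u k, ψ j⟫ ^ 2 := by
      rw [Finset.sum_comm]
    rw [h1]
    calc ∑ j : Fin r, ∑ k ∈ Sd, ⟪u k, ψ j⟫ ^ 2 ≤ ∑ _j : Fin r, (1:ℝ) :=
          Finset.sum_le_sum fun j _ => hrow j
      _ = (r:ℝ) := by simp
  -- main identity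
  have hmain : ∑ i, ∑ j, ⟪s i, ψ j⟫ ^ 2 = ∑ k, lam k * T k := by
    rw [Finset.sum_comm]
    calc ∑ j, ∑ i, ⟪s i, ψ j⟫ ^ 2 = ∑ j, ∑ k, lam k * ⟪u k, ψ j⟫ ^ 2 := by
          refine Finset.sum_congr rfl fun j _ => ?_
          rw [hsum_sq j]
          exact Finset.sum_congr rfl fun k _ => hc_sq j k
      _ = ∑ k, lam k * T k := by
          rw [Finset.sum_comm]
          exact Finset.sum_congr rfl fun k _ => (Finset.mul_sum _ _ _).symm
  have hres : ∑ k, lam k * T k = ∑ k ∈ Sd, lam k * T k := by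
    refine (Finset.sum_subset (Finset.subset_univ Sd) fun k _ hk => ?_).symm
    have : ¬ ((k:ℕ) < d) := by
      intro h; exact hk (by simp [hSd_def, h])
    rw [hlam0 k this, zero_mul]
  have hresl : ∑ k, lam k = ∑ k ∈ Sd, lam k := by
    refine (Finset.sum_subset (Finset.subset_univ Sd) fun k _ hk => ?_).symm
    have : ¬ ((k:ℕ) < d) := by
      intro h; exact hk (by simp [hSd_def, h])
    exact hlam0 k this
  -- combinatorial bound
  set ρ := lam ⟨r, hrM⟩ with hρ_def
  have hρ0 : 0 ≤ ρ := hlam_nonneg _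
  have hSrSd : Sr ⊆ Sd := by
    intro k hk
    simp only [hSr_def, hSd_def, Finset.mem_filter, Finset.mem_univ, true_and] at hk ⊢
    omega
  have hcardSr : (Sr.card : ℝ) = (r:ℝ) := by
    have he : Sr = Finset.Iio (⟨r, hrM⟩ : Fin M) := by
      ext k
      simp [hSr_def, Finset.mem_Iio, Fin.lt_def]
    rw [he, Fin.card_Iio]
  have e1 : ∑ k ∈ Sd \ Sr, T k + ∑ k ∈ Sr, T k = ∑ k ∈ Sd, T k :=
    Finset.sum_sdiff hSrSd
  have e2 : ∑ k ∈ Sd \ Sr, (lam k * T k) + ∑ k ∈ Sr, (lam k * T k)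
      = ∑ k ∈ Sd, lam k * T k := Finset.sum_sdiff hSrSd
  have h1 : ∑ k ∈ Sr, lam k * T k ≤ ∑ k ∈ Sr, lam k + ρ * (∑ k ∈ Sr, T k - r) := by
    have hle : ∑ k ∈ Sr, lam k * T k ≤ ∑ k ∈ Sr, (lam k + ρ * (T k - 1)) := by
      refine Finset.sum_le_sum fun k hk => ?_
      have hkr : (k:ℕ) < r := by
        simpa [hSr_def] using hk
      have hlk : ρ ≤ lam k := hlam_sorted k ⟨r, hrM⟩ (by rw [Fin.le_def]; simp; omega)
      have hTk1 : T k ≤ 1 := hT1 k (lt_of_lt_of_le hkr hr)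
      nlinarith [hT0 k]
    have heq : ∑ k ∈ Sr, (lam k + ρ * (T k - 1))
        = ∑ k ∈ Sr, lam k + ρ * (∑ k ∈ Sr, T k - r) := by
      rw [Finset.sum_add_distrib, ← Finset.mul_sum, Finset.sum_sub_distrib,
        Finset.sum_const, nsmul_eq_mul, mul_one, hcardSr]
    linarith [hle, heq.le, heq.ge]
  have h2 : ∑ k ∈ Sd \ Sr, lam k * T k ≤ ρ * ∑ k ∈ Sd \ Sr, T k := by
    rw [Finset.mul_sum]
    refine Finset.sum_le_sum fun k hk => ?_
    have hkr : r ≤ (k:ℕ) := by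
      simp only [Finset.mem_sdiff, hSd_def, hSr_def, Finset.mem_filter,
        Finset.mem_univ, true_and] at hk
      omega
    have hlk : lam k ≤ ρ := hlam_sorted ⟨r, hrM⟩ k (by rw [Fin.le_def]; simpa)
    nlinarith [hT0 k]
  have key : ∑ k ∈ Sd, lam k * T k ≤ ∑ k ∈ Sr, lam k := by
    nlinarith [mul_nonneg hρ0 (sub_nonneg.mpr hTsum)]
  -- final assembly
  have hsetsplit : Finset.univ.filter (fun j : Fin M => r ≤ (j : ℕ) ∧ (j : ℕ) < d)
      = Sd \ Sr := by
    ext k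
    simp only [Finset.mem_filter, Finset.mem_univ, true_and, Finset.mem_sdiff,
      hSd_def, hSr_def]
    omega
  have elam : ∑ k ∈ Sd \ Sr, lam k + ∑ k ∈ Sr, lam k = ∑ k ∈ Sd, lam k :=
    Finset.sum_sdiff hSrSd
  have hRHS : ∑ i, ‖s i - ∑ j, ⟪s i, ψ j⟫ • ψ j‖ ^ 2
      = ∑ k ∈ Sd, lam k - ∑ k ∈ Sd, lam k * T k := by
    calc ∑ i, ‖s i - ∑ j, ⟪s i, ψ j⟫ • ψ j‖ ^ 2
        = ∑ i, (‖s i‖ ^ 2 - ∑ j, ⟪s i, ψ j⟫ ^ 2) :=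
          Finset.sum_congr rfl fun i _ => pod_expand_err ψ hψite (s i)
      _ = ∑ i, ‖s i‖ ^ 2 - ∑ i, ∑ j, ⟪s i, ψ j⟫ ^ 2 := Finset.sum_sub_distrib _ _
      _ = ∑ k ∈ Sd, lam k - ∑ k ∈ Sd, lam k * T k := by
          rw [htrace, hmain, hres, hresl]
  rw [hsetsplit, hRHS]
  linarith [key, elam]
end

section
/- Let H and H' be real inner product spaces, G : H → H' a continuous linear map, V a subspace of H, ν > 0 and T > 0. Assume the Poincaré–Friedrichs inequality: there is C > 0 with C ‖w‖² ≤ ‖G w‖² for all w ∈ H. Suppose φ, η : [0,T] → H are differentiable with continuous derivatives, φ(t) ∈ V for all t, and for all t ∈ [0,T] and all v ∈ V the error equation ⟪φ'(t), v⟫ + ν ⟪G φ(t), G v⟫ = ⟪η'(t), v⟫ holds. Then for every t ∈ [0,T], ‖φ(t)‖ ≤ e^{−C ν t} ‖φ(0)‖ + ∫₀ᵗ e^{−C ν (t−s)} ‖η'(s)‖ ds. (This is the pointwise-in-time L² estimate (3.12) of the paper for Case I, with the sharp constants from the Grönwall argument.) -/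
open scoped RealInnerProductSpace

/-- Pointwise-in-time L² estimate (3.12), Case I: under the Poincaré–Friedrichs inequality
`C ‖w‖² ≤ ‖G w‖²` and the error equation `⟪φ', v⟫ + ν ⟪G φ, G v⟫ = ⟪η', v⟫` for all `v ∈ V`,
one has `‖φ(t)‖ ≤ e^{−Cνt} ‖φ(0)‖ + ∫₀ᵗ e^{−Cν(t−s)} ‖η'(s)‖ ds`. -/
theorem case1_pointwise_L2_estimate
    {H H' : Type*} [NormedAddCommGroup H] [InnerProductSpace ℝ H]
    [NormedAddCommGroup H'] [InnerProductSpace ℝ H']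
    (G : H →L[ℝ] H') (V : Submodule ℝ H)
    (ν T : ℝ) (hν : 0 < ν) (hT : 0 < T)
    (C : ℝ) (hC : 0 < C)
    (hPF : ∀ w : H, C * ‖w‖ ^ 2 ≤ ‖G w‖ ^ 2)
    (φ φ' η η' : ℝ → H)
    (hφ : ∀ t ∈ Set.Icc (0:ℝ) T, HasDerivAt φ (φ' t) t)
    (hφ'c : ContinuousOn φ' (Set.Icc (0:ℝ) T))
    (hη : ∀ t ∈ Set.Icc (0:ℝ) T, HasDerivAt η (η' t) t)
    (hη'c : ContinuousOn η' (Set.Icc (0:ℝ) T))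
    (hφV : ∀ t ∈ Set.Icc (0:ℝ) T, φ t ∈ V)
    (herr : ∀ t ∈ Set.Icc (0:ℝ) T, ∀ v ∈ V,
      ⟪φ' t, v⟫ + ν * ⟪G (φ t), G v⟫ = ⟪η' t, v⟫) :
    ∀ t ∈ Set.Icc (0:ℝ) T,
      ‖φ t‖ ≤ Real.exp (-(C * ν * t)) * ‖φ 0‖ +
        ∫ s in (0:ℝ)..t, Real.exp (-(C * ν * (t - s))) * ‖η' s‖ := by
  set k : ℝ := C * ν with hk_def
  have hk : 0 < k := mul_pos hC hν
  -- clamped continuous extension of ‖η'‖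
  set ψ : ℝ → ℝ := fun s => ‖η' (max 0 (min s T))‖ with hψ_def
  have hclamp_mem : ∀ s : ℝ, max 0 (min s T) ∈ Set.Icc (0:ℝ) T := by
    intro s
    constructor
    · exact le_max_left _ _
    · exact max_le (le_of_lt hT) (min_le_right _ _)
  have hψc : Continuous ψ := by
    have hcl : Continuous fun s : ℝ => max 0 (min s T) :=
      continuous_const.max (continuous_id.min continuous_const)
    exact (hη'c.comp_continuous hcl hclamp_mem).norm
  have hψ_eq : ∀ s ∈ Set.Icc (0:ℝ) T, ψ s = ‖η' s‖ := by
    intro s hs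
    simp only [hψ_def]
    rw [min_eq_left hs.2, max_eq_right hs.1]
  have hψ_nonneg : ∀ s, 0 ≤ ψ s := fun s => norm_nonneg _
  -- the key estimate with an ε margin
  have key : ∀ ε > (0:ℝ), ∀ t ∈ Set.Icc (0:ℝ) T,
      ‖φ t‖ ≤ Real.exp (-(k * t)) *
        (‖φ 0‖ + ε + ∫ s in (0:ℝ)..t, Real.exp (k * s) * (ψ s + ε)) := by
    intro ε hε
    set g : ℝ → ℝ := fun t => ‖φ 0‖ + ε + ∫ s in (0:ℝ)..t, Real.exp (k * s) * (ψ s + ε)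
      with hg_def
    set B : ℝ → ℝ := fun t => Real.exp (-(k * t)) * g t with hB_def
    have hint_cont : Continuous fun s => Real.exp (k * s) * (ψ s + ε) :=
      (Real.continuous_exp.comp (continuous_const.mul continuous_id)).mul
        (hψc.add continuous_const)
    have hg' : ∀ t : ℝ, HasDerivAt g (Real.exp (k * t) * (ψ t + ε)) t := by
      intro t
      have := intervalIntegral.integral_hasDerivAt_right
        (hint_cont.intervalIntegrable 0 t)
        (hint_cont.stronglyMeasurableAtFilter _ _) hint_cont.continuousAt
      exact (this.const_add (‖φ 0‖ + ε))
    have hB' : ∀ t : ℝ, HasDerivAt B (-k * B t + (ψ t + ε)) t := by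
      intro t
      have he : HasDerivAt (fun t : ℝ => Real.exp (-(k * t))) (-k * Real.exp (-(k * t))) t := by
        have h1 : HasDerivAt (fun t : ℝ => -(k * t)) (-k) t := by
          have h0 := ((hasDerivAt_id t).const_mul k).neg
          rw [mul_one] at h0
          exact h0
        simpa [mul_comm, Function.comp_def] using (Real.hasDerivAt_exp (-(k * t))).comp t h1
      have := he.mul (hg' t)
      refine this.congr_deriv ?_
      have hexp : Real.exp (-(k * t)) * (Real.exp (k * t) * (ψ t + ε)) = ψ t + ε := by
        rw [← mul_assoc, ← Real.exp_add]; simp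
      simp only [hB_def]
      rw [hexp]
      ring
    have hg_pos : ∀ t ∈ Set.Icc (0:ℝ) T, 0 < g t := by
      intro t ht
      have hint_nn : 0 ≤ ∫ s in (0:ℝ)..t, Real.exp (k * s) * (ψ s + ε) := by
        apply intervalIntegral.integral_nonneg ht.1
        intro s _
        have : 0 ≤ ψ s + ε := by positivity
        positivity
      have : 0 < ‖φ 0‖ + ε := by positivity
      simp only [hg_def]; linarith
    have hB_pos : ∀ t ∈ Set.Icc (0:ℝ) T, 0 < B t := by
      intro t ht
      exact mul_pos (Real.exp_pos _) (hg_pos t ht)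
    -- fencing with f = ‖φ‖², Bsq = B²
    have hfd : ∀ t ∈ Set.Icc (0:ℝ) T,
        HasDerivAt (fun t => ‖φ t‖ ^ 2) (2 * ⟪φ' t, φ t⟫) t := by
      intro t ht
      have h1 : HasDerivAt (fun t => ⟪φ t, φ t⟫)
          (⟪φ t, φ' t⟫ + ⟪φ' t, φ t⟫) t := (hφ t ht).inner ℝ (hφ t ht)
      have h2 : (⟪φ t, φ' t⟫ + ⟪φ' t, φ t⟫) = 2 * ⟪φ' t, φ t⟫ := by
        rw [real_inner_comm]; ring
      rw [h2] at h1
      convert h1 using 1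
      funext s
      rw [← real_inner_self_eq_norm_sq]
    have hfc : ContinuousOn (fun t => ‖φ t‖ ^ 2) (Set.Icc (0:ℝ) T) := by
      intro x hx
      exact ((hfd x hx).continuousAt).continuousWithinAt
    have hfd' : ∀ x ∈ Set.Ico (0:ℝ) T,
        HasDerivWithinAt (fun t => ‖φ t‖ ^ 2) (2 * ⟪φ' x, φ x⟫) (Set.Ici x) x := by
      intro x hx
      exact (hfd x (Set.Ico_subset_Icc_self hx)).hasDerivWithinAt
    have ha0 : ‖φ 0‖ ^ 2 ≤ (B 0) ^ 2 := by
      have hB0 : B 0 = ‖φ 0‖ + ε := by simp [hB_def, hg_def]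
      rw [hB0]
      have : ‖φ 0‖ ≤ ‖φ 0‖ + ε := by linarith
      exact pow_le_pow_left₀ (norm_nonneg _) this 2
    have hBsq' : ∀ x ∈ Set.Ico (0:ℝ) T,
        HasDerivWithinAt (fun t => (B t) ^ 2) (2 * B x * (-k * B x + (ψ x + ε)))
          (Set.Ici x) x := by
      intro x hx
      have := ((hB' x).pow 2).hasDerivWithinAt (s := Set.Ici x)
      refine this.congr_deriv ?_
      ring
    have hBsqc : ContinuousOn (fun t => (B t) ^ 2) (Set.Icc (0:ℝ) T) := by
      intro x hx
      exact (((hB' x).pow 2).continuousAt).continuousWithinAt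
    have hbound : ∀ x ∈ Set.Ico (0:ℝ) T, ‖φ x‖ ^ 2 = (B x) ^ 2 →
        2 * ⟪φ' x, φ x⟫ < 2 * B x * (-k * B x + (ψ x + ε)) := by
      intro x hx hcontact
      have hxI : x ∈ Set.Icc (0:ℝ) T := Set.Ico_subset_Icc_self hx
      have hBx : 0 < B x := hB_pos x hxI
      have hnorm : ‖φ x‖ = B x := by
        have h1 : (‖φ x‖ - B x) * (‖φ x‖ + B x) = 0 := by ring_nf; nlinarith [hcontact]
        rcases mul_eq_zero.mp h1 with h | h
        · linarith
        · nlinarith [norm_nonneg (φ x)]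
      have herr' := herr x hxI (φ x) (hφV x hxI)
      have hGG : ⟪G (φ x), G (φ x)⟫ = ‖G (φ x)‖ ^ 2 := real_inner_self_eq_norm_sq _
      have hPFx := hPF (φ x)
      have hCS : ⟪η' x, φ x⟫ ≤ ‖η' x‖ * ‖φ x‖ := real_inner_le_norm _ _
      have hψx : ψ x = ‖η' x‖ := hψ_eq x hxI
      have hip : ⟪φ' x, φ x⟫ = ⟪η' x, φ x⟫ - ν * ‖G (φ x)‖ ^ 2 := by
        rw [← hGG]; linarith
      have hle : ⟪φ' x, φ x⟫ ≤ ‖η' x‖ * B x - ν * (C * (B x) ^ 2) := by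
        rw [hip]
        have h2 : ν * (C * ‖φ x‖ ^ 2) ≤ ν * ‖G (φ x)‖ ^ 2 :=
          mul_le_mul_of_nonneg_left hPFx (le_of_lt hν)
        rw [← hnorm]
        linarith
      rw [hψx]
      have hνC : ν * C = k := by rw [hk_def]; ring
      nlinarith [hBx, hε, hle]
    have fence : ∀ x ∈ Set.Icc (0:ℝ) T, ‖φ x‖ ^ 2 ≤ (B x) ^ 2 := by
      intro x hx
      exact image_le_of_deriv_right_lt_deriv_boundary' hfc hfd' ha0 hBsqc hBsq' hbound hx
    intro t ht
    have h := fence t ht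
    have hBt : 0 < B t := hB_pos t ht
    show ‖φ t‖ ≤ B t
    nlinarith [norm_nonneg (φ t), h, hBt]
  -- pass to the limit ε → 0
  intro t ht
  set R : ℝ := Real.exp (-(k * t)) * ‖φ 0‖ +
    ∫ s in (0:ℝ)..t, Real.exp (-(k * (t - s))) * ‖η' s‖ with hR_def
  set D : ℝ := Real.exp (-(k * t)) * (1 + ∫ s in (0:ℝ)..t, Real.exp (k * s)) with hD_def
  have hexpint : Continuous fun s : ℝ => Real.exp (k * s) :=
    Real.continuous_exp.comp (continuous_const.mul continuous_id)
  have hD_pos : 0 < D := by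
    have : 0 ≤ ∫ s in (0:ℝ)..t, Real.exp (k * s) := by
      apply intervalIntegral.integral_nonneg ht.1
      intro s _; exact (Real.exp_pos _).le
    have := Real.exp_pos (-(k * t))
    simp only [hD_def]; nlinarith
  have hB_eq : ∀ ε > (0:ℝ),
      Real.exp (-(k * t)) * (‖φ 0‖ + ε + ∫ s in (0:ℝ)..t, Real.exp (k * s) * (ψ s + ε))
        = R + ε * D := by
    intro ε hε
    have hsplit : (∫ s in (0:ℝ)..t, Real.exp (k * s) * (ψ s + ε))
        = (∫ s in (0:ℝ)..t, Real.exp (k * s) * ψ s)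
          + ε * ∫ s in (0:ℝ)..t, Real.exp (k * s) := by
      rw [← intervalIntegral.integral_const_mul, ← intervalIntegral.integral_add]
      · apply intervalIntegral.integral_congr
        intro s _
        ring
      · exact ((hexpint.mul hψc).intervalIntegrable 0 t)
      · exact ((continuous_const.mul hexpint).intervalIntegrable 0 t)
    have hmain : Real.exp (-(k * t)) * (∫ s in (0:ℝ)..t, Real.exp (k * s) * ψ s)
        = ∫ s in (0:ℝ)..t, Real.exp (-(k * (t - s))) * ‖η' s‖ := by
      rw [← intervalIntegral.integral_const_mul]
      apply intervalIntegral.integral_congr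
      intro s hs
      have hsI : s ∈ Set.Icc (0:ℝ) T := by
        rw [Set.uIcc_of_le ht.1] at hs
        exact ⟨hs.1, le_trans hs.2 ht.2⟩
      show Real.exp (-(k * t)) * (Real.exp (k * s) * ψ s)
          = Real.exp (-(k * (t - s))) * ‖η' s‖
      rw [hψ_eq s hsI, ← mul_assoc, ← Real.exp_add]
      ring_nf
    rw [hsplit]
    rw [hR_def, hD_def, ← hmain]
    ring
  have hfinal : ∀ δ > (0:ℝ), ‖φ t‖ ≤ R + δ := by
    intro δ hδ
    have hε : 0 < δ / D := div_pos hδ hD_pos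
    have := key (δ / D) hε t ht
    rw [hB_eq (δ / D) hε] at this
    rwa [div_mul_cancel₀ δ (ne_of_gt hD_pos)] at this
  have : ‖φ t‖ ≤ R := le_of_forall_pos_le_add hfinal
  simpa [hR_def, hk_def] using this
end

section
/- Let H and H' be real inner product spaces, G : H → H' a continuous linear map, V a subspace of H, ν > 0 and T > 0. Assume the Poincaré–Friedrichs inequality: there is C > 0 with C ‖w‖² ≤ ‖G w‖² for all w ∈ H. Suppose u, u_r, w : [0,T] → H are differentiable with continuous derivatives, u_r(t) ∈ V and w(t) ∈ V for all t, define e := u − u_r and η := u − w, and assume: (i) the Galerkin error equation ⟪e'(t), v⟫ + ν ⟪G e(t), G v⟫ = 0 holds for all t ∈ [0,T] and all v ∈ V; (ii) the Ritz-projection property ⟪G η(t), G v⟫ = 0 holds for all t ∈ [0,T] and all v ∈ V. Then for every t ∈ [0,T], ‖e(t)‖ ≤ ‖η(t)‖ + e^{−C ν t} ( ‖e(0)‖ + ‖η(0)‖ ) + ∫₀ᵗ e^{−C ν (t−s)} ‖η'(s)‖ ds. (This is the main Case I error estimate (3.15) of the paper, showing that when the Ritz projection error η is optimal with respect to r, the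 POD Galerkin error e is optimal with respect to r; the constants are the sharp ones from the Grönwall argument.) -/
open scoped RealInnerProductSpace

/-- Grönwall-type auxiliary lemma: if `⟪θ'(s), θ(s)⟫ ≤ -k‖θ(s)‖² + ρ(s)‖θ(s)‖` on `[0,T]`,
then `‖θ(t)‖ ≤ e^{-kt}‖θ(0)‖ + ∫₀ᵗ e^{-k(t-s)} ρ(s) ds`. -/
lemma gronwall_aux {H : Type*} [NormedAddCommGroup H] [InnerProductSpace ℝ H]
    (k T : ℝ) (hk : 0 < k) (θ θd : ℝ → H) (ρ : ℝ → ℝ)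
    (hθ : ∀ s ∈ Set.Icc (0:ℝ) T, HasDerivAt θ (θd s) s)
    (hθ'c : ContinuousOn θd (Set.Icc (0:ℝ) T))
    (hρc : ContinuousOn ρ (Set.Icc (0:ℝ) T))
    (hρ0 : ∀ s ∈ Set.Icc (0:ℝ) T, 0 ≤ ρ s)
    (hkey : ∀ s ∈ Set.Icc (0:ℝ) T, ⟪θd s, θ s⟫ ≤ -k * ‖θ s‖^2 + ρ s * ‖θ s‖)
    (t : ℝ) (ht : t ∈ Set.Icc (0:ℝ) T) :
    ‖θ t‖ ≤ Real.exp (-(k*t)) * ‖θ 0‖ + ∫ s in (0:ℝ)..t, Real.exp (-(k*(t-s))) * ρ s := by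
  obtain ⟨ht0, htT⟩ := ht
  have hIccsub : Set.Icc (0:ℝ) t ⊆ Set.Icc (0:ℝ) T := Set.Icc_subset_Icc le_rfl htT
  have huIcc : Set.uIcc (0:ℝ) t ⊆ Set.Icc (0:ℝ) T := by
    rw [Set.uIcc_of_le ht0]; exact hIccsub
  have main : ∀ ε : ℝ, 0 < ε →
      ‖θ t‖ ≤ Real.exp (-(k*t)) * ‖θ 0‖ + (∫ s in (0:ℝ)..t, Real.exp (-(k*(t-s))) * ρ s) + 2*ε := by
    intro ε hε
    have hg0 : ∀ s : ℝ, (0:ℝ) < ⟪θ s, θ s⟫ + ε ^ 2 :=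
      fun s => add_pos_of_nonneg_of_pos real_inner_self_nonneg (by positivity)
    have hFpos : ∀ s : ℝ, 0 < Real.sqrt (⟪θ s, θ s⟫ + ε ^ 2) :=
      fun s => Real.sqrt_pos.2 (hg0 s)
    have hFsq : ∀ s : ℝ, (Real.sqrt (⟪θ s, θ s⟫ + ε ^ 2))^2 = ‖θ s‖^2 + ε^2 := fun s => by
      rw [Real.sq_sqrt (hg0 s).le, real_inner_self_eq_norm_sq]
    have hFge : ∀ s : ℝ, ε ≤ Real.sqrt (⟪θ s, θ s⟫ + ε ^ 2) := fun s => by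
      nlinarith [hFsq s, hFpos s, sq_nonneg ‖θ s‖]
    have hθleF : ∀ s : ℝ, ‖θ s‖ ≤ Real.sqrt (⟪θ s, θ s⟫ + ε ^ 2) := fun s => by
      nlinarith [hFsq s, hFpos s, norm_nonneg (θ s)]
    -- derivative of the regularized norm
    have hFd : ∀ s ∈ Set.Icc (0:ℝ) T,
        HasDerivAt (fun x => Real.sqrt (⟪θ x, θ x⟫ + ε ^ 2))
          (⟪θd s, θ s⟫ / Real.sqrt (⟪θ s, θ s⟫ + ε ^ 2)) s := by
      intro s hs
      have hd := hθ s hs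
      have h1 : HasDerivAt (fun x => (⟪θ x, θ x⟫:ℝ) + ε ^ 2) (2 * ⟪θd s, θ s⟫) s := by
        have h2 := (HasDerivAt.inner ℝ hd hd).add_const (ε ^ 2)
        exact h2.congr_deriv (by rw [real_inner_comm (θ s) (θd s)]; ring)
      have h3 := h1.sqrt (ne_of_gt (hg0 s))
      convert h3 using 1
      exact (mul_div_mul_left _ _ two_ne_zero).symm
    -- derivative of ψ
    have hψd : ∀ s ∈ Set.Icc (0:ℝ) T,
        HasDerivAt (fun x => Real.exp (k*x) * Real.sqrt (⟪θ x, θ x⟫ + ε ^ 2))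
          (Real.exp (k*s) * (k * Real.sqrt (⟪θ s, θ s⟫ + ε ^ 2) +
            ⟪θd s, θ s⟫ / Real.sqrt (⟪θ s, θ s⟫ + ε ^ 2))) s := by
      intro s hs
      have he : HasDerivAt (fun x : ℝ => Real.exp (k*x)) (k * Real.exp (k*s)) s := by
        have h0 := ((hasDerivAt_id s).const_mul k).exp
        simpa [mul_comm] using h0
      have := he.mul (hFd s hs)
      exact this.congr_deriv (by ring)
    -- continuity facts
    have hθcont : ContinuousOn θ (Set.Icc (0:ℝ) T) :=
      fun s hs => ((hθ s hs).continuousAt).continuousWithinAt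
    have hFcont : ContinuousOn (fun x => Real.sqrt (⟪θ x, θ x⟫ + ε ^ 2)) (Set.Icc (0:ℝ) T) :=
      Real.continuous_sqrt.comp_continuousOn ((hθcont.inner hθcont).add continuousOn_const)
    have hψ'cont : ContinuousOn (fun s => Real.exp (k*s) * (k * Real.sqrt (⟪θ s, θ s⟫ + ε ^ 2) +
        ⟪θd s, θ s⟫ / Real.sqrt (⟪θ s, θ s⟫ + ε ^ 2))) (Set.Icc (0:ℝ) T) :=
      ((Real.continuous_exp.comp (continuous_const.mul continuous_id)).continuousOn).mul
        (((continuousOn_const.mul hFcont)).add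
          ((hθ'c.inner hθcont).div hFcont (fun s _ => (hFpos s).ne')))
    have hecont : ContinuousOn (fun s : ℝ => Real.exp (k*s)) (Set.Icc (0:ℝ) T) :=
      (Real.continuous_exp.comp (continuous_const.mul continuous_id)).continuousOn
    -- FTC
    have hFTC : ∫ s in (0:ℝ)..t, Real.exp (k*s) * (k * Real.sqrt (⟪θ s, θ s⟫ + ε ^ 2) +
          ⟪θd s, θ s⟫ / Real.sqrt (⟪θ s, θ s⟫ + ε ^ 2)) =
        Real.exp (k*t) * Real.sqrt (⟪θ t, θ t⟫ + ε ^ 2) -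
          Real.exp (k*0) * Real.sqrt (⟪θ 0, θ 0⟫ + ε ^ 2) :=
      intervalIntegral.integral_eq_sub_of_hasDerivAt (fun s hs => hψd s (huIcc hs))
        ((hψ'cont.mono huIcc).intervalIntegrable)
    -- pointwise bound on the derivative
    have hbound : ∀ s ∈ Set.Icc (0:ℝ) t,
        Real.exp (k*s) * (k * Real.sqrt (⟪θ s, θ s⟫ + ε ^ 2) +
          ⟪θd s, θ s⟫ / Real.sqrt (⟪θ s, θ s⟫ + ε ^ 2)) ≤
        Real.exp (k*s) * (ρ s + k * ε) := by
      intro s hs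
      have hs' := hIccsub hs
      apply mul_le_mul_of_nonneg_left _ (Real.exp_nonneg _)
      have hK := hkey s hs'
      have hF := hFpos s
      have hdiv : ⟪θd s, θ s⟫ / Real.sqrt (⟪θ s, θ s⟫ + ε ^ 2) ≤
          ρ s + k * ε - k * Real.sqrt (⟪θ s, θ s⟫ + ε ^ 2) := by
        rw [div_le_iff₀ hF]
        nlinarith [hFsq s, hFge s, hθleF s, hρ0 s hs', norm_nonneg (θ s), hK, hε,
          mul_le_mul_of_nonneg_left (hθleF s) (hρ0 s hs'), mul_pos hk hε]
      linarith
    -- integrability of bound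
    have hbint : IntervalIntegrable (fun s => Real.exp (k*s) * (ρ s + k * ε))
        MeasureTheory.volume 0 t :=
      ((hecont.mul ((hρc.add continuousOn_const))).mono huIcc).intervalIntegrable
    have hmono : (∫ s in (0:ℝ)..t, Real.exp (k*s) * (k * Real.sqrt (⟪θ s, θ s⟫ + ε ^ 2) +
          ⟪θd s, θ s⟫ / Real.sqrt (⟪θ s, θ s⟫ + ε ^ 2))) ≤
        ∫ s in (0:ℝ)..t, Real.exp (k*s) * (ρ s + k * ε) :=
      intervalIntegral.integral_mono_on ht0
        ((hψ'cont.mono huIcc).intervalIntegrable) hbint hbound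
    -- split the bound integral
    have hint1 : IntervalIntegrable (fun s => Real.exp (k*s) * ρ s)
        MeasureTheory.volume 0 t := ((hecont.mul hρc).mono huIcc).intervalIntegrable
    have hint2 : IntervalIntegrable (fun s => Real.exp (k*s) * (k * ε))
        MeasureTheory.volume 0 t :=
      ((hecont.mul continuousOn_const).mono huIcc).intervalIntegrable
    have hsplit : (∫ s in (0:ℝ)..t, Real.exp (k*s) * (ρ s + k * ε)) =
        (∫ s in (0:ℝ)..t, Real.exp (k*s) * ρ s) +
          ∫ s in (0:ℝ)..t, Real.exp (k*s) * (k * ε) := by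
      rw [← intervalIntegral.integral_add hint1 hint2]
      apply intervalIntegral.integral_congr
      intro s _
      ring
    have hconst : (∫ s in (0:ℝ)..t, Real.exp (k*s) * (k * ε)) =
        ε * Real.exp (k*t) - ε * Real.exp (k*0) := by
      apply intervalIntegral.integral_eq_sub_of_hasDerivAt
      · intro s _
        have he : HasDerivAt (fun x : ℝ => Real.exp (k*x)) (k * Real.exp (k*s)) s := by
          have h0 := ((hasDerivAt_id s).const_mul k).exp
          simpa [mul_comm] using h0
        have := he.const_mul ε
        exact this.congr_deriv (by ring)
      · exact hint2
    -- assemble: ψ t ≤ ψ 0 + J + ε (e^{kt} - 1)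
    have hψle : Real.exp (k*t) * Real.sqrt (⟪θ t, θ t⟫ + ε ^ 2) ≤
        Real.exp (k*0) * Real.sqrt (⟪θ 0, θ 0⟫ + ε ^ 2) +
          (∫ s in (0:ℝ)..t, Real.exp (k*s) * ρ s) +
          (ε * Real.exp (k*t) - ε * Real.exp (k*0)) := by
      have := hmono
      rw [hFTC, hsplit, hconst] at this
      linarith
    -- relate integrals
    have hconv : (∫ s in (0:ℝ)..t, Real.exp (-(k*(t-s))) * ρ s) =
        Real.exp (-(k*t)) * ∫ s in (0:ℝ)..t, Real.exp (k*s) * ρ s := by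
      rw [← intervalIntegral.integral_const_mul]
      apply intervalIntegral.integral_congr
      intro s _
      dsimp only
      rw [← mul_assoc, ← Real.exp_add]
      congr 2
      ring
    -- finish
    have hE0 : (0:ℝ) ≤ Real.exp (-(k*t)) := (Real.exp_pos _).le
    have hone : Real.exp (-(k*t)) * Real.exp (k*t) = 1 := by
      rw [← Real.exp_add]; norm_num
    have hmul := mul_le_mul_of_nonneg_left hψle hE0
    rw [mul_add, mul_add, ← mul_assoc, hone, one_mul] at hmul
    have h2 : Real.sqrt (⟪θ 0, θ 0⟫ + ε ^ 2) ≤ ‖θ 0‖ + ε := by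
      nlinarith [hFsq 0, hFpos 0, norm_nonneg (θ 0), hε, mul_nonneg (norm_nonneg (θ 0)) hε.le]
    have h2mul := mul_le_mul_of_nonneg_left h2 hE0
    have hεone : ε * (Real.exp (-(k*t)) * Real.exp (k*t)) = ε := by rw [hone, mul_one]
    have h1 := hθleF t
    rw [hconv]
    simp only [mul_zero, Real.exp_zero, one_mul, mul_one] at hmul h2mul hεone
    linarith [hmul, h1, h2mul, hεone, hε]
  refine le_of_forall_pos_le_add fun ε hε => ?_
  have := main (ε/2) (half_pos hε)
  linarith

/-- Main Case I error estimate (3.15): under the Poincaré–Friedrichs inequality, the Galerkin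
error equation for `e = u − u_r`, and the Ritz-projection property for `η = u − w`, one has
`‖e(t)‖ ≤ ‖η(t)‖ + e^{−Cνt}(‖e(0)‖ + ‖η(0)‖) + ∫₀ᵗ e^{−Cν(t−s)} ‖η'(s)‖ ds`. -/
theorem case1_main_error_estimate
    {H H' : Type*} [NormedAddCommGroup H] [InnerProductSpace ℝ H]
    [NormedAddCommGroup H'] [InnerProductSpace ℝ H']
    (G : H →L[ℝ] H') (V : Submodule ℝ H)
    (ν T : ℝ) (hν : 0 < ν) (hT : 0 < T)
    (C : ℝ) (hC : 0 < C)
    (hPF : ∀ w : H, C * ‖w‖ ^ 2 ≤ ‖G w‖ ^ 2)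
    (u u' ur ur' w w' : ℝ → H)
    (hu : ∀ t ∈ Set.Icc (0:ℝ) T, HasDerivAt u (u' t) t)
    (hu'c : ContinuousOn u' (Set.Icc (0:ℝ) T))
    (hur : ∀ t ∈ Set.Icc (0:ℝ) T, HasDerivAt ur (ur' t) t)
    (hur'c : ContinuousOn ur' (Set.Icc (0:ℝ) T))
    (hw : ∀ t ∈ Set.Icc (0:ℝ) T, HasDerivAt w (w' t) t)
    (hw'c : ContinuousOn w' (Set.Icc (0:ℝ) T))
    (hurV : ∀ t ∈ Set.Icc (0:ℝ) T, ur t ∈ V)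
    (hwV : ∀ t ∈ Set.Icc (0:ℝ) T, w t ∈ V)
    (hGalerkin : ∀ t ∈ Set.Icc (0:ℝ) T, ∀ v ∈ V,
      ⟪u' t - ur' t, v⟫ + ν * ⟪G (u t - ur t), G v⟫ = 0)
    (hRitz : ∀ t ∈ Set.Icc (0:ℝ) T, ∀ v ∈ V,
      ⟪G (u t - w t), G v⟫ = 0) :
    ∀ t ∈ Set.Icc (0:ℝ) T,
      ‖u t - ur t‖ ≤ ‖u t - w t‖ +
        Real.exp (-(C * ν * t)) * (‖u 0 - ur 0‖ + ‖u 0 - w 0‖) +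
        ∫ s in (0:ℝ)..t, Real.exp (-(C * ν * (t - s))) * ‖u' s - w' s‖ := by
  intro t ht
  have hk : (0:ℝ) < C * ν := mul_pos hC hν
  -- key differential inequality for θ = w - ur
  have hkey : ∀ s ∈ Set.Icc (0:ℝ) T,
      ⟪w' s - ur' s, w s - ur s⟫ ≤
        -(C*ν) * ‖w s - ur s‖^2 + ‖u' s - w' s‖ * ‖w s - ur s‖ := by
    intro s hs
    have hmem : w s - ur s ∈ V := V.sub_mem (hwV s hs) (hurV s hs)
    have hg := hGalerkin s hs _ hmem
    have hr := hRitz s hs _ hmem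
    have e1 : (⟪G (u s - ur s), G (w s - ur s)⟫ : ℝ) = ‖G (w s - ur s)‖^2 := by
      have hdecomp : u s - ur s = (u s - w s) + (w s - ur s) := by abel
      rw [hdecomp, map_add, inner_add_left, hr, zero_add, real_inner_self_eq_norm_sq]
    have e2 : (⟪u' s - ur' s, w s - ur s⟫ : ℝ) =
        ⟪u' s - w' s, w s - ur s⟫ + ⟪w' s - ur' s, w s - ur s⟫ := by
      have hdecomp : u' s - ur' s = (u' s - w' s) + (w' s - ur' s) := by abel
      rw [hdecomp, inner_add_left]
    have hcs : -⟪u' s - w' s, w s - ur s⟫ ≤ ‖u' s - w' s‖ * ‖w s - ur s‖ := by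
      have h := abs_real_inner_le_norm (u' s - w' s) (w s - ur s)
      exact (neg_le_abs _).trans h
    have hpf := hPF (w s - ur s)
    have hpf' : ν * (C * ‖w s - ur s‖^2) ≤ ν * ‖G (w s - ur s)‖^2 :=
      mul_le_mul_of_nonneg_left hpf hν.le
    rw [e2, e1] at hg
    nlinarith [hg, hcs, hpf']
  have hθ := gronwall_aux (C*ν) T hk (fun s => w s - ur s) (fun s => w' s - ur' s)
    (fun s => ‖u' s - w' s‖)
    (fun s hs => (hw s hs).sub (hur s hs))
    (hw'c.sub hur'c)
    ((hu'c.sub hw'c).norm)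
    (fun s _ => norm_nonneg _)
    hkey t ht
  have h1 : ‖u t - ur t‖ ≤ ‖u t - w t‖ + ‖w t - ur t‖ := by
    have := norm_add_le (u t - w t) (w t - ur t)
    simpa [sub_add_sub_cancel] using this
  have h2 : ‖w 0 - ur 0‖ ≤ ‖u 0 - ur 0‖ + ‖u 0 - w 0‖ := by
    have := norm_sub_le (u 0 - ur 0) (u 0 - w 0)
    simpa [sub_sub_sub_cancel_left] using this
  have h3 := mul_le_mul_of_nonneg_left h2 (Real.exp_nonneg (-(C*ν*t)))
  linarith
end

section
/- Let H and H' be real inner product spaces, G : H → H' a continuous linear map, V a subspace of H, ν > 0 and T > 0. Suppose φ, η : [0,T] → H are differentiable with continuous derivatives, φ(t) ∈ V for all t, and for all t ∈ [0,T] and all v ∈ V the error equation ⟪φ'(t), v⟫ + ν ⟪G φ(t), G v⟫ = ⟪η'(t), v⟫ holds. Then for every t ∈ [0,T], ‖G φ(t)‖² ≤ ‖G φ(0)‖² + (1/ν) ∫₀ᵗ ‖η'(s)‖² ds. (This is the integrated form of the Case I H¹-seminorm estimate (3.30) of the paper, obtained by testing the error equation with v = φ'(t) and applying Young's inequality; note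 that no POD inverse estimate and no factor C_inv(r) is needed, so the estimate is optimal with respect to r.) -/
open scoped RealInnerProductSpace

/-- Integrated Case I H¹-seminorm estimate (3.30): under the error equation
`⟪φ', v⟫ + ν ⟪G φ, G v⟫ = ⟪η', v⟫` for all `v ∈ V`, one has
`‖G φ(t)‖² ≤ ‖G φ(0)‖² + (1/ν) ∫₀ᵗ ‖η'(s)‖² ds`, with no inverse-estimate factor. -/
theorem case1_H1_seminorm_estimate
    {H H' : Type*} [NormedAddCommGroup H] [InnerProductSpace ℝ H]
    [NormedAddCommGroup H'] [InnerProductSpace ℝ H']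
    (G : H →L[ℝ] H') (V : Submodule ℝ H)
    (ν T : ℝ) (hν : 0 < ν) (hT : 0 < T)
    (φ φ' η η' : ℝ → H)
    (hφ : ∀ t ∈ Set.Icc (0:ℝ) T, HasDerivAt φ (φ' t) t)
    (hφ'c : ContinuousOn φ' (Set.Icc (0:ℝ) T))
    (hη : ∀ t ∈ Set.Icc (0:ℝ) T, HasDerivAt η (η' t) t)
    (hη'c : ContinuousOn η' (Set.Icc (0:ℝ) T))
    (hφV : ∀ t ∈ Set.Icc (0:ℝ) T, φ t ∈ V)
    (herr : ∀ t ∈ Set.Icc (0:ℝ) T, ∀ v ∈ V,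
      ⟪φ' t, v⟫ + ν * ⟪G (φ t), G v⟫ = ⟪η' t, v⟫) :
    ∀ t ∈ Set.Icc (0:ℝ) T,
      ‖G (φ t)‖ ^ 2 ≤ ‖G (φ 0)‖ ^ 2 + (1 / ν) * ∫ s in (0:ℝ)..t, ‖η' s‖ ^ 2 := by
  -- Step 1: φ' s lies in the closure of V for every s ∈ [0,T]
  have hφ'V : ∀ s ∈ Set.Icc (0:ℝ) T, φ' s ∈ closure (V : Set H) := by
    intro s hs
    have hd : HasDerivWithinAt φ (φ' s) (Set.Icc 0 T) s := (hφ s hs).hasDerivWithinAt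
    have hslope := hasDerivWithinAt_iff_tendsto_slope.mp hd
    have hne : (nhdsWithin s (Set.Icc (0:ℝ) T \ {s})).NeBot := by
      rcases lt_or_eq_of_le hs.2 with h | h
      · have hsub : Set.Ioc s T ⊆ Set.Icc (0:ℝ) T \ {s} := by
          intro x hx
          exact ⟨⟨le_trans hs.1 hx.1.le, hx.2⟩, ne_of_gt hx.1⟩
        have := left_nhdsWithin_Ioc_neBot h
        exact this.mono (nhdsWithin_mono _ hsub)
      · subst h
        have hsub : Set.Ico (0:ℝ) s ⊆ Set.Icc (0:ℝ) s \ {s} := by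
          intro x hx
          exact ⟨⟨hx.1, hx.2.le⟩, ne_of_lt hx.2⟩
        have := right_nhdsWithin_Ico_neBot hT
        exact this.mono (nhdsWithin_mono _ hsub)
    refine @mem_closure_of_tendsto _ _ _ _ _ _ _ hne hslope ?_
    filter_upwards [self_mem_nhdsWithin] with x hx
    have hmem : φ x - φ s ∈ V := V.sub_mem (hφV x hx.1) (hφV s hs)
    exact V.smul_mem _ hmem
  -- Step 2: the error equation tested with φ' s
  have hkey : ∀ s ∈ Set.Icc (0:ℝ) T,
      ‖φ' s‖ ^ 2 + ν * ⟪G (φ s), G (φ' s)⟫ = ⟪η' s, φ' s⟫ := by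
    intro s hs
    have hcont1 : Continuous fun v : H => ⟪φ' s, v⟫ + ν * ⟪G (φ s), G v⟫ := by
      exact ((continuous_const.inner continuous_id).add
        (continuous_const.mul (continuous_const.inner G.continuous)))
    have hcont2 : Continuous fun v : H => ⟪η' s, v⟫ :=
      continuous_const.inner continuous_id
    have heq : Set.EqOn (fun v : H => ⟪φ' s, v⟫ + ν * ⟪G (φ s), G v⟫)
        (fun v : H => ⟪η' s, v⟫) (closure (V : Set H)) := by
      apply Set.EqOn.closure _ hcont1 hcont2
      intro v hv
      exact herr s hs v hv
    have := heq (hφ'V s hs)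
    simpa [real_inner_self_eq_norm_sq] using this
  -- Step 3: the derivative of s ↦ ‖G (φ s)‖² and its pointwise bound
  set g : ℝ → ℝ := fun s => ‖G (φ s)‖ ^ 2 with hg
  set F : ℝ → ℝ := fun s => 2 * ⟪G (φ s), G (φ' s)⟫ with hF
  have hgd : ∀ s ∈ Set.Icc (0:ℝ) T, HasDerivAt g (F s) s := by
    intro s hs
    have hGφ : HasDerivAt (fun x => G (φ x)) (G (φ' s)) s :=
      (G.hasFDerivAt).comp_hasDerivAt s (hφ s hs)
    have := hGφ.inner ℝ hGφ
    have h2 : HasDerivAt (fun x => ⟪G (φ x), G (φ x)⟫) (F s) s := by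
      refine this.congr_deriv ?_
      rw [hF]
      simp only [real_inner_comm (G (φ' s)) (G (φ s))]
      ring
    have heqf : (fun x => ⟪G (φ x), G (φ x)⟫) = g := by
      funext x
      rw [hg, real_inner_self_eq_norm_sq]
    rwa [heqf] at h2
  have hbound : ∀ s ∈ Set.Icc (0:ℝ) T, F s ≤ (1 / ν) * ‖η' s‖ ^ 2 := by
    intro s hs
    have hk := hkey s hs
    have hinner : ⟪η' s, φ' s⟫ ≤ ‖η' s‖ * ‖φ' s‖ := real_inner_le_norm _ _
    have hyoung : ‖η' s‖ * ‖φ' s‖ ≤ (1/2) * ‖η' s‖ ^ 2 + (1/2) * ‖φ' s‖ ^ 2 := by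
      nlinarith [sq_nonneg (‖η' s‖ - ‖φ' s‖)]
    have hν' : 0 < ν := hν
    have : ν * ⟪G (φ s), G (φ' s)⟫ ≤ (1/2) * ‖η' s‖ ^ 2 := by
      nlinarith [sq_nonneg (‖φ' s‖)]
    show 2 * ⟪G (φ s), G (φ' s)⟫ ≤ (1 / ν) * ‖η' s‖ ^ 2
    rw [div_mul_eq_mul_div, le_div_iff₀ hν']
    nlinarith
  -- Step 4: integrate
  intro t ht
  obtain ⟨ht0, htT⟩ := ht
  have hsub : Set.Icc (0:ℝ) t ⊆ Set.Icc (0:ℝ) T := Set.Icc_subset_Icc le_rfl htT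
  have huIcc : Set.uIcc (0:ℝ) t = Set.Icc 0 t := Set.uIcc_of_le ht0
  have hφc : ContinuousOn φ (Set.Icc (0:ℝ) T) := fun s hs =>
    (hφ s hs).continuousAt.continuousWithinAt
  have hFc : ContinuousOn F (Set.Icc (0:ℝ) T) := by
    apply ContinuousOn.mul continuousOn_const
    exact ContinuousOn.inner ((G.continuous.comp_continuousOn hφc))
      ((G.continuous.comp_continuousOn hφ'c))
  have hFi : IntervalIntegrable F MeasureTheory.volume 0 t :=
    (hFc.mono hsub).intervalIntegrable_of_Icc ht0
  have hHc : ContinuousOn (fun s => (1 / ν) * ‖η' s‖ ^ 2) (Set.Icc (0:ℝ) T) := by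
    apply ContinuousOn.mul continuousOn_const
    exact (hη'c.norm).pow 2
  have hHi : IntervalIntegrable (fun s => (1 / ν) * ‖η' s‖ ^ 2)
      MeasureTheory.volume 0 t := (hHc.mono hsub).intervalIntegrable_of_Icc ht0
  have hftc : ∫ s in (0:ℝ)..t, F s = g t - g 0 := by
    apply intervalIntegral.integral_eq_sub_of_hasDerivAt
    · intro s hs
      rw [huIcc] at hs
      exact hgd s (hsub hs)
    · exact hFi
  have hmono : ∫ s in (0:ℝ)..t, F s ≤ ∫ s in (0:ℝ)..t, (1 / ν) * ‖η' s‖ ^ 2 := by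
    apply intervalIntegral.integral_mono_on ht0 hFi hHi
    intro s hs
    exact hbound s (hsub hs)
  have hintmul : ∫ s in (0:ℝ)..t, (1 / ν) * ‖η' s‖ ^ 2
      = (1 / ν) * ∫ s in (0:ℝ)..t, ‖η' s‖ ^ 2 := by
    exact intervalIntegral.integral_const_mul _ _
  have : g t - g 0 ≤ (1 / ν) * ∫ s in (0:ℝ)..t, ‖η' s‖ ^ 2 := by
    rw [← hintmul, ← hftc]; exact hmono
  simp only [hg] at this
  linarith
end

section
/- Let H and H' be real inner product spaces, G : H → H' a continuous linear map, V a subspace of H, ν > 0 and T > 0. Suppose φ : [0,T] → H is differentiable with continuous derivative and φ(t) ∈ V for all t, η : [0,T] → H is continuous, and for all t ∈ [0,T] and all v ∈ V the error equation ⟪φ'(t), v⟫ + ν ⟪G φ(t), G v⟫ = ν ⟪G η(t), G v⟫ holds. Then for every t ∈ [0,T], ‖φ(t)‖² ≤ ‖φ(0)‖² + ν ∫₀ᵗ ‖G η(s)‖² ds. (This is the integrated form of estimate (3.21) of Approach II.A of the paper: testing the error equation with v = φ(t), applying Cauchy–Schwarz and Young's inequality, and dropping the nonnegative diffusion term; the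 appearance of ‖G η‖ rather than ‖η‖ on the right-hand side is why this approach yields L²-estimates that are suboptimal with respect to r.) -/
open scoped RealInnerProductSpace

/-- Integrated estimate (3.21) of Approach II.A: under the error equation
`⟪φ', v⟫ + ν ⟪G φ, G v⟫ = ν ⟪G η, G v⟫` for all `v ∈ V`, one has
`‖φ(t)‖² ≤ ‖φ(0)‖² + ν ∫₀ᵗ ‖G η(s)‖² ds`. -/
theorem approach_IIA_estimate
    {H H' : Type*} [NormedAddCommGroup H] [InnerProductSpace ℝ H]
    [NormedAddCommGroup H'] [InnerProductSpace ℝ H']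
    (G : H →L[ℝ] H') (V : Submodule ℝ H)
    (ν T : ℝ) (hν : 0 < ν) (hT : 0 < T)
    (φ φ' η : ℝ → H)
    (hφ : ∀ t ∈ Set.Icc (0:ℝ) T, HasDerivAt φ (φ' t) t)
    (hφ'c : ContinuousOn φ' (Set.Icc (0:ℝ) T))
    (hηc : ContinuousOn η (Set.Icc (0:ℝ) T))
    (hφV : ∀ t ∈ Set.Icc (0:ℝ) T, φ t ∈ V)
    (herr : ∀ t ∈ Set.Icc (0:ℝ) T, ∀ v ∈ V,
      ⟪φ' t, v⟫ + ν * ⟪G (φ t), G v⟫ = ν * ⟪G (η t), G v⟫) :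
    ∀ t ∈ Set.Icc (0:ℝ) T,
      ‖φ t‖ ^ 2 ≤ ‖φ 0‖ ^ 2 + ν * ∫ s in (0:ℝ)..t, ‖G (η s)‖ ^ 2 := by
  intro t ht
  obtain ⟨ht0, htT⟩ := ht
  have hsub : Set.Icc (0:ℝ) t ⊆ Set.Icc 0 T := Set.Icc_subset_Icc le_rfl htT
  have huIcc : Set.uIcc (0:ℝ) t = Set.Icc 0 t := Set.uIcc_of_le ht0
  have hφc : ContinuousOn φ (Set.Icc (0:ℝ) T) := fun s hs =>
    (hφ s hs).continuousAt.continuousWithinAt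
  -- derivative of s ↦ ⟪φ s, φ s⟫
  have hF : ∀ s ∈ Set.uIcc (0:ℝ) t,
      HasDerivAt (fun τ => ⟪φ τ, φ τ⟫) (2 * ⟪φ' s, φ s⟫) s := by
    intro s hs
    have hs' : s ∈ Set.Icc (0:ℝ) T := hsub (huIcc ▸ hs)
    have h := (hφ s hs').inner ℝ (hφ s hs')
    refine h.congr_deriv ?_
    rw [real_inner_comm (φ s) (φ' s)]; ring
  -- integrability
  have hcont1 : ContinuousOn (fun s => 2 * ⟪φ' s, φ s⟫) (Set.Icc (0:ℝ) t) :=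
    (continuous_const.continuousOn.mul
      ((hφ'c.mono hsub).inner (hφc.mono hsub)))
  have hint1 : IntervalIntegrable (fun s => 2 * ⟪φ' s, φ s⟫)
      MeasureTheory.volume 0 t :=
    hcont1.intervalIntegrable_of_Icc ht0
  have hint2 : IntervalIntegrable (fun s => ν * ‖G (η s)‖ ^ 2)
      MeasureTheory.volume 0 t := by
    apply ContinuousOn.intervalIntegrable_of_Icc ht0
    exact continuous_const.continuousOn.mul
      (((G.continuous.comp_continuousOn (hηc.mono hsub)).norm).pow 2)
  -- FTC
  have hFTC : ∫ s in (0:ℝ)..t, 2 * ⟪φ' s, φ s⟫ = ⟪φ t, φ t⟫ - ⟪φ 0, φ 0⟫ :=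
    intervalIntegral.integral_eq_sub_of_hasDerivAt hF hint1
  -- pointwise estimate
  have hpt : ∀ s ∈ Set.Icc (0:ℝ) t,
      2 * ⟪φ' s, φ s⟫ ≤ ν * ‖G (η s)‖ ^ 2 := by
    intro s hs
    have hs' : s ∈ Set.Icc (0:ℝ) T := hsub hs
    have he := herr s hs' (φ s) (hφV s hs')
    have h1 : ⟪G (η s), G (φ s)⟫ ≤ ‖G (η s)‖ * ‖G (φ s)‖ := real_inner_le_norm _ _
    have h2 : ⟪G (φ s), G (φ s)⟫ = ‖G (φ s)‖ ^ 2 := real_inner_self_eq_norm_sq _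
    nlinarith [sq_nonneg (‖G (η s)‖ - ‖G (φ s)‖), hν.le]
  have hmono : ∫ s in (0:ℝ)..t, 2 * ⟪φ' s, φ s⟫ ≤
      ∫ s in (0:ℝ)..t, ν * ‖G (η s)‖ ^ 2 :=
    intervalIntegral.integral_mono_on ht0 hint1 hint2 hpt
  have hconst : ∫ s in (0:ℝ)..t, ν * ‖G (η s)‖ ^ 2 =
      ν * ∫ s in (0:ℝ)..t, ‖G (η s)‖ ^ 2 :=
    intervalIntegral.integral_const_mul _ _
  have e1 : ‖φ t‖ ^ 2 = ⟪φ t, φ t⟫ := (real_inner_self_eq_norm_sq _).symm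
  have e2 : ‖φ 0‖ ^ 2 = ⟪φ 0, φ 0⟫ := (real_inner_self_eq_norm_sq _).symm
  linarith [hFTC ▸ hmono]
end

section
/- Let H and H' be real inner product spaces, G : H → H' a continuous linear map, V a subspace of H, ν > 0 and T > 0. Assume the inverse-estimate hypothesis: there is C_inv > 0 with ‖G v‖ ≤ C_inv ‖v‖ for all v ∈ V. Suppose φ : [0,T] → H is differentiable with continuous derivative and φ(t) ∈ V for all t, η : [0,T] → H is continuous, and for all t ∈ [0,T] and all v ∈ V the error equation ⟪φ'(t), v⟫ + ν ⟪G φ(t), G v⟫ = ν ⟪G η(t), G v⟫ holds. Then for every t ∈ [0,T], ‖φ(t)‖ ≤ ‖φ(0)‖ + C_inv · ν · ∫₀ᵗ ‖G η(s)‖ ds. (This is the integrated form of estimate (3.24) of Approach II.B of the paper, obtained by applying the POD inverse estimate to ‖G φ‖ on the right-hand side of the energy inequality; the extra factor C_inv increases the suboptimality with respect to r.) -/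
open scoped RealInnerProductSpace
open MeasureTheory intervalIntegral Set

/-- Integrated estimate (3.24) of Approach II.B: under the inverse estimate
`‖G v‖ ≤ C_inv ‖v‖` on `V` and the error equation
`⟪φ', v⟫ + ν ⟪G φ, G v⟫ = ν ⟪G η, G v⟫` for all `v ∈ V`, one has
`‖φ(t)‖ ≤ ‖φ(0)‖ + C_inv ν ∫₀ᵗ ‖G η(s)‖ ds`. -/
theorem approach_IIB_estimate
    {H H' : Type*} [NormedAddCommGroup H] [InnerProductSpace ℝ H]
    [NormedAddCommGroup H'] [InnerProductSpace ℝ H']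
    (G : H →L[ℝ] H') (V : Submodule ℝ H)
    (ν T : ℝ) (hν : 0 < ν) (hT : 0 < T)
    (Cinv : ℝ) (hCinv : 0 < Cinv)
    (hinv : ∀ v ∈ V, ‖G v‖ ≤ Cinv * ‖v‖)
    (φ φ' η : ℝ → H)
    (hφ : ∀ t ∈ Set.Icc (0:ℝ) T, HasDerivAt φ (φ' t) t)
    (hφ'c : ContinuousOn φ' (Set.Icc (0:ℝ) T))
    (hηc : ContinuousOn η (Set.Icc (0:ℝ) T))
    (hφV : ∀ t ∈ Set.Icc (0:ℝ) T, φ t ∈ V)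
    (herr : ∀ t ∈ Set.Icc (0:ℝ) T, ∀ v ∈ V,
      ⟪φ' t, v⟫ + ν * ⟪G (φ t), G v⟫ = ν * ⟪G (η t), G v⟫) :
    ∀ t ∈ Set.Icc (0:ℝ) T,
      ‖φ t‖ ≤ ‖φ 0‖ + Cinv * ν * ∫ s in (0:ℝ)..t, ‖G (η s)‖ := by
  intro t ht
  -- the integrand
  set h : ℝ → ℝ := fun s => ‖G (η s)‖ with hh
  have hhc : ContinuousOn h (Set.Icc (0:ℝ) T) :=
    (G.continuous.comp_continuousOn hηc).norm
  -- key pointwise inner-product bound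
  have key : ∀ s ∈ Set.Icc (0:ℝ) T, ⟪φ' s, φ s⟫ ≤ Cinv * ν * h s * ‖φ s‖ := by
    intro s hs
    have h1 := herr s hs (φ s) (hφV s hs)
    have h2 : ⟪φ' s, φ s⟫ = ν * ⟪G (η s), G (φ s)⟫ - ν * ⟪G (φ s), G (φ s)⟫ := by
      linarith
    have h3 : ⟪G (η s), G (φ s)⟫ ≤ ‖G (η s)‖ * ‖G (φ s)‖ := real_inner_le_norm _ _
    have h4 : ‖G (φ s)‖ ≤ Cinv * ‖φ s‖ := hinv _ (hφV s hs)
    have h5 : (0:ℝ) ≤ ⟪G (φ s), G (φ s)⟫ := real_inner_self_nonneg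
    have h6 : ‖G (η s)‖ * ‖G (φ s)‖ ≤ ‖G (η s)‖ * (Cinv * ‖φ s‖) :=
      mul_le_mul_of_nonneg_left h4 (norm_nonneg _)
    calc ⟪φ' s, φ s⟫ ≤ ν * (‖G (η s)‖ * (Cinv * ‖φ s‖)) := by
          rw [h2]; nlinarith
      _ = Cinv * ν * h s * ‖φ s‖ := by ring
  -- ε-regularized estimate
  have main : ∀ ε : ℝ, 0 < ε →
      Real.sqrt (‖φ t‖ ^ 2 + ε ^ 2) ≤
        Real.sqrt (‖φ 0‖ ^ 2 + ε ^ 2) + Cinv * ν * ∫ s in (0:ℝ)..t, h s := by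
    intro ε hε
    set g : ℝ → ℝ := fun s => Real.sqrt (‖φ s‖ ^ 2 + ε ^ 2) with hg
    set I : ℝ → ℝ := fun s => ∫ u in (0:ℝ)..s, h u with hI
    set F : ℝ → ℝ := fun s => g s - Cinv * ν * I s with hF
    have hpos : ∀ s : ℝ, 0 < ‖φ s‖ ^ 2 + ε ^ 2 := fun s => by positivity
    -- derivative of g at points of Icc
    have hgd : ∀ s ∈ Set.Icc (0:ℝ) T,
        HasDerivAt g (⟪φ' s, φ s⟫ / Real.sqrt (‖φ s‖ ^ 2 + ε ^ 2)) s := by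
      intro s hs
      have hin : HasDerivAt (fun u => ⟪φ u, φ u⟫ + ε ^ 2)
          (⟪φ s, φ' s⟫ + ⟪φ' s, φ s⟫) s :=
        (HasDerivAt.inner ℝ (hφ s hs) (hφ s hs)).add_const _
      have hsq := (Real.hasDerivAt_sqrt (ne_of_gt (by
        rw [real_inner_self_eq_norm_sq]; exact hpos s))).comp s hin
      simp only [Function.comp_def, real_inner_self_eq_norm_sq] at hsq
      refine hsq.congr_deriv ?_
      rw [real_inner_comm (φ s) (φ' s)]
      have := hpos s
      have hsqrt : 0 < Real.sqrt (‖φ s‖ ^ 2 + ε ^ 2) := Real.sqrt_pos.2 (hpos s)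
      field_simp
      ring
    -- integrability
    have hint : ∀ s ∈ Set.Icc (0:ℝ) T, IntervalIntegrable h volume 0 s := by
      intro s hs
      exact (hhc.mono (by rw [Set.uIcc_of_le hs.1]; exact Set.Icc_subset_Icc le_rfl hs.2)
        ).intervalIntegrable
    -- continuity of F on Icc
    have hφc : ContinuousOn φ (Set.Icc (0:ℝ) T) := fun s hs =>
      (hφ s hs).continuousAt.continuousWithinAt
    have hgc : ContinuousOn g (Set.Icc (0:ℝ) T) := by
      apply ContinuousOn.sqrt
      exact (hφc.norm.pow 2).add continuousOn_const
    have hIc : ContinuousOn I (Set.Icc (0:ℝ) T) := by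
      have := intervalIntegral.continuousOn_primitive_interval
        (f := h) (μ := volume) (a := (0:ℝ)) (b := T)
        ((hhc.mono (by rw [Set.uIcc_of_le hT.le])).integrableOn_compact isCompact_uIcc)
      rwa [Set.uIcc_of_le hT.le] at this
    have hFc : ContinuousOn F (Set.Icc (0:ℝ) T) :=
      hgc.sub (continuousOn_const.mul hIc)
    -- F is antitone on Icc
    have hFa : AntitoneOn F (Set.Icc (0:ℝ) T) := by
      apply antitoneOn_of_deriv_nonpos (convex_Icc _ _) hFc
      · intro s hs
        rw [interior_Icc] at hs
        have hs' : s ∈ Set.Icc (0:ℝ) T := Ioo_subset_Icc_self hs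
        have hId : HasDerivAt I (h s) s := by
          refine intervalIntegral.integral_hasDerivAt_right (hint s hs') ?_ ?_
          · exact ContinuousAt.stronglyMeasurableAtFilter isOpen_Ioo
              (fun x hx => (hhc x (Ioo_subset_Icc_self hx)).continuousAt
                (Icc_mem_nhds hx.1 hx.2)) s hs
          · exact (hhc s hs').continuousAt (Icc_mem_nhds hs.1 hs.2)
        exact ((hgd s hs').sub (hId.const_mul _)).differentiableAt.differentiableWithinAt
      · intro s hs
        rw [interior_Icc] at hs
        have hs' : s ∈ Set.Icc (0:ℝ) T := Ioo_subset_Icc_self hs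
        have hId : HasDerivAt I (h s) s := by
          refine intervalIntegral.integral_hasDerivAt_right (hint s hs') ?_ ?_
          · exact ContinuousAt.stronglyMeasurableAtFilter isOpen_Ioo
              (fun x hx => (hhc x (Ioo_subset_Icc_self hx)).continuousAt
                (Icc_mem_nhds hx.1 hx.2)) s hs
          · exact (hhc s hs').continuousAt (Icc_mem_nhds hs.1 hs.2)
        have hFd : HasDerivAt F
            (⟪φ' s, φ s⟫ / Real.sqrt (‖φ s‖ ^ 2 + ε ^ 2) - Cinv * ν * h s) s :=
          (hgd s hs').sub (hId.const_mul _)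
        rw [hFd.deriv]
        have hsqrt : 0 < Real.sqrt (‖φ s‖ ^ 2 + ε ^ 2) := Real.sqrt_pos.2 (hpos s)
        have hle : ‖φ s‖ ≤ Real.sqrt (‖φ s‖ ^ 2 + ε ^ 2) :=
          Real.le_sqrt_of_sq_le (by nlinarith)
        have hhnn : 0 ≤ h s := norm_nonneg _
        rw [sub_nonpos, div_le_iff₀ hsqrt]
        calc ⟪φ' s, φ s⟫ ≤ Cinv * ν * h s * ‖φ s‖ := key s hs'
          _ ≤ Cinv * ν * h s * Real.sqrt (‖φ s‖ ^ 2 + ε ^ 2) := by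
              apply mul_le_mul_of_nonneg_left hle (by positivity)
    have := hFa (Set.left_mem_Icc.2 hT.le) ht ht.1
    have hI0 : I 0 = 0 := by simp [hI]
    simp only [hF, hI0, mul_zero, sub_zero] at this
    linarith [this]
  -- let ε → 0
  have habs : ∀ ε : ℝ, 0 < ε →
      ‖φ t‖ ≤ ‖φ 0‖ + Cinv * ν * (∫ s in (0:ℝ)..t, h s) + ε := by
    intro ε hε
    have h1 : ‖φ t‖ ≤ Real.sqrt (‖φ t‖ ^ 2 + ε ^ 2) :=
      Real.le_sqrt_of_sq_le (by nlinarith)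
    have h2 : Real.sqrt (‖φ 0‖ ^ 2 + ε ^ 2) ≤ ‖φ 0‖ + ε := by
      calc Real.sqrt (‖φ 0‖ ^ 2 + ε ^ 2) ≤ Real.sqrt ((‖φ 0‖ + ε) ^ 2) :=
            Real.sqrt_le_sqrt (by nlinarith [norm_nonneg (φ 0)])
        _ = ‖φ 0‖ + ε := Real.sqrt_sq (by positivity)
    have := main ε hε
    linarith
  have := le_of_forall_pos_le_add (fun ε hε => habs ε hε)
  linarith [this]
end

section
/- Let H and H' be real inner product spaces, G : H → H' a continuous linear map, V a subspace of H, ν > 0 and T > 0. Assume the inverse-estimate hypothesis: there is C_inv > 0 with ‖G v‖ ≤ C_inv ‖v‖ for all v ∈ V. Suppose φ : [0,T] → H is differentiable with continuous derivative and φ(t) ∈ V for all t, η : [0,T] → H is continuous, and for all t ∈ [0,T] and all v ∈ V the error equation ⟪φ'(t), v⟫ + ν ⟪G φ(t), G v⟫ = ν ⟪G η(t), G v⟫ holds. Then for every t ∈ [0,T], ‖G φ(t)‖² ≤ ‖G φ(0)‖² + ν · C_inv² · ∫₀ᵗ ‖G η(s)‖² ds. (This is the integrated form of estimate (3.27) of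 Approach II.C of the paper, obtained by testing the error equation with v = φ'(t), applying Young's inequality, and using the POD inverse estimate; the factor C_inv² makes the resulting H¹-seminorm estimate suboptimal with respect to r.) -/
open scoped RealInnerProductSpace

/-- Integrated estimate (3.27) of Approach II.C: under the inverse estimate
`‖G v‖ ≤ C_inv ‖v‖` on `V` and the error equation
`⟪φ', v⟫ + ν ⟪G φ, G v⟫ = ν ⟪G η, G v⟫` for all `v ∈ V`, one has
`‖G φ(t)‖² ≤ ‖G φ(0)‖² + ν C_inv² ∫₀ᵗ ‖G η(s)‖² ds`. -/
theorem approach_IIC_estimate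
    {H H' : Type*} [NormedAddCommGroup H] [InnerProductSpace ℝ H]
    [NormedAddCommGroup H'] [InnerProductSpace ℝ H']
    (G : H →L[ℝ] H') (V : Submodule ℝ H)
    (ν T : ℝ) (hν : 0 < ν) (hT : 0 < T)
    (Cinv : ℝ) (hCinv : 0 < Cinv)
    (hinv : ∀ v ∈ V, ‖G v‖ ≤ Cinv * ‖v‖)
    (φ φ' η : ℝ → H)
    (hφ : ∀ t ∈ Set.Icc (0:ℝ) T, HasDerivAt φ (φ' t) t)
    (hφ'c : ContinuousOn φ' (Set.Icc (0:ℝ) T))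
    (hηc : ContinuousOn η (Set.Icc (0:ℝ) T))
    (hφV : ∀ t ∈ Set.Icc (0:ℝ) T, φ t ∈ V)
    (herr : ∀ t ∈ Set.Icc (0:ℝ) T, ∀ v ∈ V,
      ⟪φ' t, v⟫ + ν * ⟪G (φ t), G v⟫ = ν * ⟪G (η t), G v⟫) :
    ∀ t ∈ Set.Icc (0:ℝ) T,
      ‖G (φ t)‖ ^ 2 ≤ ‖G (φ 0)‖ ^ 2 +
        ν * Cinv ^ 2 * ∫ s in (0:ℝ)..t, ‖G (η s)‖ ^ 2 := by
  -- continuity of φ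
  have hφc : ContinuousOn φ (Set.Icc (0:ℝ) T) :=
    fun s hs => (hφ s hs).continuousAt.continuousWithinAt
  -- φ' t lies in the closure of V
  have hclos : ∀ s ∈ Set.Icc (0:ℝ) T, φ' s ∈ closure (V : Set H) := by
    intro s hs
    have hd : HasDerivWithinAt φ (φ' s) (Set.Icc 0 T) s := (hφ s hs).hasDerivWithinAt
    have hslope := hasDerivWithinAt_iff_tendsto_slope.1 hd
    have hne : (nhdsWithin s (Set.Icc (0:ℝ) T \ {s})).NeBot := by
      rw [← mem_closure_iff_nhdsWithin_neBot]
      rcases lt_or_eq_of_le hs.2 with h | h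
      · have hsub : Set.Ioo s T ⊆ Set.Icc (0:ℝ) T \ {s} := fun x hx =>
          ⟨⟨le_trans hs.1 hx.1.le, hx.2.le⟩, ne_of_gt hx.1⟩
        have : s ∈ closure (Set.Ioo s T) := by
          rw [closure_Ioo h.ne]; exact ⟨le_rfl, hs.2⟩
        exact closure_mono hsub this
      · have h0 : (0:ℝ) < s := h ▸ hT
        have hsub : Set.Ioo (0:ℝ) s ⊆ Set.Icc (0:ℝ) T \ {s} := fun x hx =>
          ⟨⟨hx.1.le, le_trans hx.2.le hs.2⟩, ne_of_lt hx.2⟩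
        have : s ∈ closure (Set.Ioo (0:ℝ) s) := by
          rw [closure_Ioo h0.ne]; exact ⟨h0.le, le_rfl⟩
        exact closure_mono hsub this
    refine mem_closure_of_tendsto hslope ?_
    filter_upwards [self_mem_nhdsWithin] with x hx
    rw [slope_def_module]
    exact V.smul_mem _ (V.sub_mem (hφV x hx.1) (hφV s hs))
  -- extend the inverse estimate to the closure of V
  have hinv' : ∀ v ∈ closure (V : Set H), ‖G v‖ ≤ Cinv * ‖v‖ := by
    have hcl : IsClosed {v : H | ‖G v‖ ≤ Cinv * ‖v‖} :=
      isClosed_le (G.continuous.norm) (continuous_const.mul continuous_norm)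
    exact fun v hv => closure_minimal (fun w hw => hinv w hw) hcl hv
  -- extend the error equation to the closure of V
  have herr' : ∀ s ∈ Set.Icc (0:ℝ) T, ∀ v ∈ closure (V : Set H),
      ⟪φ' s, v⟫ + ν * ⟪G (φ s), G v⟫ = ν * ⟪G (η s), G v⟫ := by
    intro s hs
    have hcl : IsClosed {v : H |
        ⟪φ' s, v⟫ + ν * ⟪G (φ s), G v⟫ = ν * ⟪G (η s), G v⟫} := by
      apply isClosed_eq
      · exact ((continuous_const.inner continuous_id).add
          (continuous_const.mul (continuous_const.inner G.continuous)))
      · exact continuous_const.mul (continuous_const.inner G.continuous)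
    exact fun v hv => closure_minimal (fun w hw => herr s hs w hw) hcl hv
  intro t ht
  have hIcc : Set.Icc (0:ℝ) t ⊆ Set.Icc (0:ℝ) T := Set.Icc_subset_Icc le_rfl ht.2
  have huIcc : Set.uIcc (0:ℝ) t = Set.Icc 0 t := Set.uIcc_of_le ht.1
  -- the derivative of ‖G φ‖²
  have hf : ∀ s ∈ Set.uIcc (0:ℝ) t, HasDerivAt (fun s => ‖G (φ s)‖ ^ 2)
      (2 * ⟪G (φ s), G (φ' s)⟫) s := by
    intro s hs
    have hs' : s ∈ Set.Icc (0:ℝ) T := hIcc (huIcc ▸ hs)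
    have h1 : HasDerivAt (fun s => G (φ s)) (G (φ' s)) s :=
      G.hasFDerivAt.comp_hasDerivAt s (hφ s hs')
    exact h1.norm_sq
  -- integrability
  have hGφc : ContinuousOn (fun s => G (φ s)) (Set.Icc (0:ℝ) T) :=
    G.continuous.comp_continuousOn hφc
  have hGφ'c : ContinuousOn (fun s => G (φ' s)) (Set.Icc (0:ℝ) T) :=
    G.continuous.comp_continuousOn hφ'c
  have hintf : IntervalIntegrable (fun s => 2 * ⟪G (φ s), G (φ' s)⟫)
      MeasureTheory.volume 0 t := by
    apply ContinuousOn.intervalIntegrable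
    rw [huIcc]
    exact (continuousOn_const.mul ((hGφc.mono hIcc).inner (hGφ'c.mono hIcc)))
  have hintg : IntervalIntegrable (fun s => ν * Cinv ^ 2 * ‖G (η s)‖ ^ 2)
      MeasureTheory.volume 0 t := by
    apply ContinuousOn.intervalIntegrable
    rw [huIcc]
    exact continuousOn_const.mul
      (((G.continuous.comp_continuousOn hηc).mono hIcc).norm.pow 2)
  -- pointwise bound on the derivative
  have key : ∀ s ∈ Set.Icc (0:ℝ) t,
      2 * ⟪G (φ s), G (φ' s)⟫ ≤ ν * Cinv ^ 2 * ‖G (η s)‖ ^ 2 := by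
    intro s hs
    have hs' : s ∈ Set.Icc (0:ℝ) T := hIcc hs
    have heq := herr' s hs' (φ' s) (hclos s hs')
    have hsq : ⟪φ' s, φ' s⟫ = ‖φ' s‖ ^ 2 := real_inner_self_eq_norm_sq _
    have hb1 : ⟪G (η s), G (φ' s)⟫ ≤ ‖G (η s)‖ * (Cinv * ‖φ' s‖) := by
      calc ⟪G (η s), G (φ' s)⟫ ≤ ‖G (η s)‖ * ‖G (φ' s)‖ := real_inner_le_norm _ _
        _ ≤ ‖G (η s)‖ * (Cinv * ‖φ' s‖) :=
          mul_le_mul_of_nonneg_left (hinv' _ (hclos s hs')) (norm_nonneg _)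
    nlinarith [sq_nonneg (ν * Cinv * ‖G (η s)‖ - 2 * ‖φ' s‖),
      mul_le_mul_of_nonneg_left hb1 hν.le, sq_nonneg (‖φ' s‖),
      mul_pos hν hν, sq_nonneg (Cinv * ‖G (η s)‖), hν.le]
  -- FTC and integral comparison
  have hFTC := intervalIntegral.integral_eq_sub_of_hasDerivAt hf hintf
  have hmono := intervalIntegral.integral_mono_on ht.1 hintf hintg key
  rw [hFTC] at hmono
  have hconst : (∫ s in (0:ℝ)..t, ν * Cinv ^ 2 * ‖G (η s)‖ ^ 2)
      = ν * Cinv ^ 2 * ∫ s in (0:ℝ)..t, ‖G (η s)‖ ^ 2 :=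
    intervalIntegral.integral_const_mul _ _
  rw [hconst] at hmono
  linarith
end

section
/- Let H and H' be real inner product spaces, G : H → H' a continuous linear map, V a subspace of H, ν > 0 and T > 0. Suppose φ : [0,T] → H is differentiable with continuous derivative and φ(t) ∈ V for all t, η : [0,T] → H is continuous, and for all t ∈ [0,T] and all v ∈ V the error equation ⟪φ'(t), v⟫ + ν ⟪G φ(t), G v⟫ = ν ⟪G η(t), G v⟫ holds. Then ‖φ(T)‖² + ν ∫₀ᵀ ‖G φ(s)‖² ds ≤ ‖φ(0)‖² + ν ∫₀ᵀ ‖G η(s)‖² ds. (This is the estimate of Approach II.D of the paper, eq. (3.23b): the error in the solution norm L²(0,T;H¹) is optimal with respect to r even when the difference quotients are not used, since both sides involve the H¹-seminorm of the corresponding quantities.) -/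
open scoped RealInnerProductSpace

/-- Approach II.D estimate (3.23b): under the error equation
`⟪φ', v⟫ + ν ⟪G φ, G v⟫ = ν ⟪G η, G v⟫` for all `v ∈ V`, one has
`‖φ(T)‖² + ν ∫₀ᵀ ‖G φ(s)‖² ds ≤ ‖φ(0)‖² + ν ∫₀ᵀ ‖G η(s)‖² ds`. -/
theorem approach_IID_estimate
    {H H' : Type*} [NormedAddCommGroup H] [InnerProductSpace ℝ H]
    [NormedAddCommGroup H'] [InnerProductSpace ℝ H']
    (G : H →L[ℝ] H') (V : Submodule ℝ H)
    (ν T : ℝ) (hν : 0 < ν) (hT : 0 < T)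
    (φ φ' η : ℝ → H)
    (hφ : ∀ t ∈ Set.Icc (0:ℝ) T, HasDerivAt φ (φ' t) t)
    (hφ'c : ContinuousOn φ' (Set.Icc (0:ℝ) T))
    (hηc : ContinuousOn η (Set.Icc (0:ℝ) T))
    (hφV : ∀ t ∈ Set.Icc (0:ℝ) T, φ t ∈ V)
    (herr : ∀ t ∈ Set.Icc (0:ℝ) T, ∀ v ∈ V,
      ⟪φ' t, v⟫ + ν * ⟪G (φ t), G v⟫ = ν * ⟪G (η t), G v⟫) :
    ‖φ T‖ ^ 2 + ν * ∫ s in (0:ℝ)..T, ‖G (φ s)‖ ^ 2 ≤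
      ‖φ 0‖ ^ 2 + ν * ∫ s in (0:ℝ)..T, ‖G (η s)‖ ^ 2 := by
  have hIcc : Set.uIcc (0:ℝ) T = Set.Icc 0 T := Set.uIcc_of_le hT.le
  have hφc : ContinuousOn φ (Set.Icc (0:ℝ) T) := fun t ht =>
    (hφ t ht).continuousAt.continuousWithinAt
  -- derivative of ‖φ‖²
  have hderiv : ∀ t ∈ Set.uIcc (0:ℝ) T,
      HasDerivAt (fun t => ‖φ t‖ ^ 2) (2 * ⟪φ' t, φ t⟫) t := by
    intro t ht
    rw [hIcc] at ht
    have h := (hφ t ht).inner ℝ (hφ t ht)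
    have h2 : HasDerivAt (fun t => ⟪φ t, φ t⟫) (2 * ⟪φ' t, φ t⟫) t := by
      refine h.congr_deriv ?_
      rw [real_inner_comm (φ t) (φ' t)]; ring
    have : (fun t => ‖φ t‖ ^ 2) = fun t => ⟪φ t, φ t⟫ := by
      funext s; rw [real_inner_self_eq_norm_sq]
    rw [this]; exact h2
  -- integrability helpers
  have hGφ : ContinuousOn (fun s => ‖G (φ s)‖ ^ 2) (Set.Icc (0:ℝ) T) :=
    ((G.continuous.comp_continuousOn hφc).norm.pow 2)
  have hGη : ContinuousOn (fun s => ‖G (η s)‖ ^ 2) (Set.Icc (0:ℝ) T) :=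
    ((G.continuous.comp_continuousOn hηc).norm.pow 2)
  have hint1 : IntervalIntegrable (fun s => 2 * ⟪φ' s, φ s⟫) MeasureTheory.volume 0 T := by
    apply ContinuousOn.intervalIntegrable
    rw [hIcc]
    exact (continuous_const.continuousOn.mul (hφ'c.inner hφc))
  have hintφ : IntervalIntegrable (fun s => ‖G (φ s)‖ ^ 2) MeasureTheory.volume 0 T := by
    apply ContinuousOn.intervalIntegrable; rw [hIcc]; exact hGφ
  have hintη : IntervalIntegrable (fun s => ‖G (η s)‖ ^ 2) MeasureTheory.volume 0 T := by
    apply ContinuousOn.intervalIntegrable; rw [hIcc]; exact hGη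
  have hint2 : IntervalIntegrable (fun s => ν * ‖G (η s)‖ ^ 2 - ν * ‖G (φ s)‖ ^ 2)
      MeasureTheory.volume 0 T :=
    (hintη.const_mul ν).sub (hintφ.const_mul ν)
  -- FTC
  have hFTC : ∫ s in (0:ℝ)..T, 2 * ⟪φ' s, φ s⟫ = ‖φ T‖ ^ 2 - ‖φ 0‖ ^ 2 :=
    intervalIntegral.integral_eq_sub_of_hasDerivAt hderiv hint1
  -- pointwise estimate
  have hpt : ∀ s ∈ Set.Icc (0:ℝ) T,
      2 * ⟪φ' s, φ s⟫ ≤ ν * ‖G (η s)‖ ^ 2 - ν * ‖G (φ s)‖ ^ 2 := by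
    intro s hs
    have he := herr s hs (φ s) (hφV s hs)
    have hCS : 2 * ⟪G (η s), G (φ s)⟫ ≤ ‖G (η s)‖ ^ 2 + ‖G (φ s)‖ ^ 2 := by
      have h0 : (0:ℝ) ≤ ‖G (η s) - G (φ s)‖ ^ 2 := sq_nonneg _
      rw [← real_inner_self_eq_norm_sq] at h0
      rw [inner_sub_sub_self] at h0
      rw [real_inner_self_eq_norm_sq, real_inner_self_eq_norm_sq] at h0
      have hcomm : ⟪G (η s), G (φ s)⟫ = ⟪G (φ s), G (η s)⟫ := real_inner_comm _ _
      linarith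
    have hself : ⟪G (φ s), G (φ s)⟫ = ‖G (φ s)‖ ^ 2 := real_inner_self_eq_norm_sq _
    nlinarith [he, hCS]
  have hmono : ∫ s in (0:ℝ)..T, 2 * ⟪φ' s, φ s⟫ ≤
      ∫ s in (0:ℝ)..T, (ν * ‖G (η s)‖ ^ 2 - ν * ‖G (φ s)‖ ^ 2) :=
    intervalIntegral.integral_mono_on hT.le hint1 hint2 hpt
  have hsplit : ∫ s in (0:ℝ)..T, (ν * ‖G (η s)‖ ^ 2 - ν * ‖G (φ s)‖ ^ 2) =
      ν * (∫ s in (0:ℝ)..T, ‖G (η s)‖ ^ 2) - ν * (∫ s in (0:ℝ)..T, ‖G (φ s)‖ ^ 2) := by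
    rw [intervalIntegral.integral_sub (hintη.const_mul ν) (hintφ.const_mul ν),
      intervalIntegral.integral_const_mul, intervalIntegral.integral_const_mul]
  rw [hFTC, hsplit] at hmono
  linarith
end
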